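/- arXiv:1906.10093 — 3 statements merged into one kernel-verified Lean document; each statement's English description precedes it below -/
import Mathlib

section
/- For every unambiguous Büchi automaton A = (Q, Σ, δ, Q₀, F) there exists an unambiguous Büchi automaton A′ = (Q′, Σ, δ′, Q₀′, F′) over the same alphabet Σ such that |Q′| ≤ |Q|, |δ′| ≤ |δ|, L(A′) = L(A), and A′ contains no diamond. -/
open Matrix MeasureTheory

attribute [local instance] Classical.propDecidable

/-- A Büchi automaton with state space `Q` and alphabet `A`. -/
structure BA (Q A : Type) where
  delta : Q → A → Set Q
  init : Set Q
  acc : Set Q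

namespace BA

variable {Q A : Type}

/-- A run of the automaton on an infinite word. -/
def InfRun (𝒜 : BA Q A) (w : ℕ → A) (ρ : ℕ → Q) : Prop :=
  ρ 0 ∈ 𝒜.init ∧ ∀ i, ρ (i + 1) ∈ 𝒜.delta (ρ i) (w i)

/-- An accepting run: some accepting state occurs infinitely often. -/
def AccRun (𝒜 : BA Q A) (w : ℕ → A) (ρ : ℕ → Q) : Prop :=
  𝒜.InfRun w ρ ∧ ∃ q ∈ 𝒜.acc, {i : ℕ | ρ i = q}.Infinite

/-- The language of infinite words having at least one accepting run. -/
def Lang (𝒜 : BA Q A) : Set (ℕ → A) := {w | ∃ ρ, 𝒜.AccRun w ρ}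

/-- Unambiguous: every infinite word has at most one accepting run. -/
def Unambiguous (𝒜 : BA Q A) : Prop :=
  ∀ w ρ₁ ρ₂, 𝒜.AccRun w ρ₁ → 𝒜.AccRun w ρ₂ → ρ₁ = ρ₂

/-- `𝒜.IsRun q w ρ r` : the list `ρ` (of length `|w| + 1`) is a run for the
finite word `w` from `q` to `r`. -/
def IsRun (𝒜 : BA Q A) : Q → List A → List Q → Q → Prop
  | q, [], ρ, r => q = r ∧ ρ = [q]
  | q, a :: w, ρ, r => ∃ q' ρ', ρ = q :: ρ' ∧ q' ∈ 𝒜.delta q a ∧ 𝒜.IsRun q' w ρ' r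

/-- A diamond: two distinct runs for the same finite word with the
same start and end states. -/
def HasDiamond (𝒜 : BA Q A) : Prop :=
  ∃ q r w ρ₁ ρ₂, ρ₁ ≠ ρ₂ ∧ 𝒜.IsRun q w ρ₁ r ∧ 𝒜.IsRun q w ρ₂ r

/-- Every state is reachable from some initial state. -/
def AllReachable (𝒜 : BA Q A) : Prop :=
  ∀ q, ∃ q₀ ∈ 𝒜.init, ∃ w ρ, 𝒜.IsRun q₀ w ρ q

/-- The automaton `𝒜` with `q` as the only initial state. -/
def fromState (𝒜 : BA Q A) (q : Q) : BA Q A := { 𝒜 with init := {q} }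

/-- `|δ|`: the number of pairs `(q, r)` such that `r ∈ δ(q, a)` for some letter `a`. -/
noncomputable def numTrans (𝒜 : BA Q A) : ℕ := {p : Q × Q | ∃ a, p.2 ∈ 𝒜.delta p.1 a}.ncard

end BA

/-- A (row-)stochastic matrix with nonnegative entries. -/
def IsMarkov {S : Type} [Fintype S] (M : Matrix S S ℝ) : Prop :=
  (∀ s t, 0 ≤ M s t) ∧ ∀ s, ∑ t, M s t = 1

/-- `Pr s` is the probability measure of the Markov chain `M` started at `s`:
the cylinder of the finite sequence `u 0, …, u n` has measure
`M (u 0) (u 1) ⋯ M (u (n-1)) (u n)` if `u 0 = s`, and `0` otherwise. -/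
def CylinderSpec {S : Type} [Fintype S] [MeasurableSpace S]
    (M : Matrix S S ℝ) (Pr : S → Measure (ℕ → S)) : Prop :=
  ∀ (s : S) (n : ℕ) (u : ℕ → S),
    Pr s {ω | ∀ i ≤ n, ω i = u i} =
      if u 0 = s then ENNReal.ofReal (∏ i ∈ Finset.range n, M (u i) (u (i + 1))) else 0

/-- The vector `z`, given by `z ⟨q, s⟩ = Pr_s (L(𝒜_q))`. -/
noncomputable def zvec {Q S : Type} [MeasurableSpace S]
    (𝒜 : BA Q S) (Pr : S → Measure (ℕ → S)) : Q × S → ℝ :=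
  fun p => ((Pr p.2) ((𝒜.fromState p.1).Lang)).toReal

/-- The matrix `B` built from the automaton `𝒜` and the Markov chain `M`. -/
noncomputable def Bmat {Q S : Type} (𝒜 : BA Q S) (M : Matrix S S ℝ) :
    Matrix (Q × S) (Q × S) ℝ :=
  Matrix.of fun p p' => if p'.1 ∈ 𝒜.delta p.1 p.2 then M p.2 p'.2 else 0

/-- The spectral radius of a real square matrix: the largest absolute value of
its complex eigenvalues. -/
noncomputable def specRad {n : Type} [Fintype n] [DecidableEq n] (N : Matrix n n ℝ) : ℝ :=
  sSup {x : ℝ | ∃ c ∈ spectrum ℂ (N.map Complex.ofReal), x = ‖c‖}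

/-- `D` is a strongly connected component of the graph of the nonnegative matrix `N`
(edges are the positive entries). -/
def IsSCC {V : Type} (N : Matrix V V ℝ) (D : Set V) : Prop :=
  ∃ v, D = {w | Relation.ReflTransGen (fun a b => 0 < N a b) v w ∧
               Relation.ReflTransGen (fun a b => 0 < N a b) w v}

/-- The submatrix `N_{D,D}`. -/
def subMat {V : Type} (N : Matrix V V ℝ) (D : Set V) : Matrix ↥D ↥D ℝ :=
  N.submatrix (Subtype.val) (Subtype.val)

/-- An SCC `D` of `B` is recurrent if `ρ(B_{D,D}) = 1`. -/
def RecurrentSCC {Q S : Type} [Fintype Q] [Fintype S]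
    (𝒜 : BA Q S) (M : Matrix S S ℝ) (D : Set (Q × S)) : Prop :=
  specRad (subMat (Bmat 𝒜 M) D) = 1

/-- An SCC `D` of `B` is accepting if it contains a pair `⟨q, s⟩` with `q` accepting. -/
def AcceptingSCC {Q S : Type} (𝒜 : BA Q S) (D : Set (Q × S)) : Prop :=
  ∃ p ∈ D, p.1 ∈ 𝒜.acc

/-- One step of the fibre operation: `f ⇒ t`. -/
def fibStep {Q S : Type} (𝒜 : BA Q S) (D : Set (Q × S)) (f : Set (Q × S)) (t : S) :
    Set (Q × S) :=
  {p ∈ D | p.2 = t ∧ ∃ e ∈ f, p.1 ∈ 𝒜.delta e.1 e.2}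

/-- The fibre operation along a word: `f ⇒ w`. -/
def fibRun {Q S : Type} (𝒜 : BA Q S) (D : Set (Q × S)) (f : Set (Q × S)) :
    List S → Set (Q × S)
  | [] => f
  | t :: w => fibRun 𝒜 D (fibStep 𝒜 D f t) w

/-- A word `s₁ ⋯ sₙ` is enabled if `M_{sᵢ, sᵢ₊₁} > 0` for all `i < n`. -/
def Enabled {S : Type} (M : Matrix S S ℝ) (l : List S) : Prop :=
  l.Chain' fun a b => 0 < M a b

/-- `c` is a cut: `c = d ⇒ v` for some `d ∈ D` and enabled `v`, and `c ⇒ w`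
is nonempty for every `w` for which it is defined. -/
def IsCut {Q S : Type} (𝒜 : BA Q S) (M : Matrix S S ℝ) (D : Set (Q × S))
    (c : Set (Q × S)) : Prop :=
  ∃ d ∈ D, ∃ v : List S, Enabled M (d.2 :: v) ∧ c = fibRun 𝒜 D {d} v ∧
    ∀ w : List S, Enabled M (v.getLastD d.2 :: w) → fibRun 𝒜 D c w ≠ ∅

/-- The co-reachability set `Co(d)`: those `e ∈ D` with `{d, e} ⊆ d ⇒ w` for some `w`. -/
def Co {Q S : Type} (𝒜 : BA Q S) (M : Matrix S S ℝ) (D : Set (Q × S)) (d : Q × S) :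
    Set (Q × S) :=
  {e ∈ D | ∃ w : List S, Enabled M (d.2 :: w) ∧
    d ∈ fibRun 𝒜 D {d} w ∧ e ∈ fibRun 𝒜 D {d} w}

/-- The matrix `Δ(t)` over `D`. -/
noncomputable def Delta {Q S : Type} (𝒜 : BA Q S) (M : Matrix S S ℝ) (D : Set (Q × S))
    (t : S) : Matrix ↥D ↥D ℝ :=
  Matrix.of fun p p' =>
    if (p' : Q × S).2 = t ∧ 0 < M (p : Q × S).2 t ∧
       (p' : Q × S).1 ∈ 𝒜.delta (p : Q × S).1 (p : Q × S).2
    then 1 else 0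

/-- The matrix `Δ(w)` for a word `w` (`Δ(ε)` is the identity). -/
noncomputable def DeltaW {Q S : Type} [Fintype Q] [Fintype S]
    (𝒜 : BA Q S) (M : Matrix S S ℝ) (D : Set (Q × S)) : List S → Matrix ↥D ↥D ℝ
  | [] => 1
  | t :: w => Delta 𝒜 M D t * DeltaW 𝒜 M D w

/-- The matrix `Δ′(t)` over `D`. -/
noncomputable def Delta' {Q S : Type} (D : Set (Q × S)) (t : S) : Matrix ↥D ↥D ℝ :=
  Matrix.of fun p p' => if p = p' ∧ (p : Q × S).2 = t then 1 else 0

/-- The vector space `V(s)` spanned by the vectors `Δ′(s) Δ(w) y` for all words `w`. -/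
noncomputable def Vspace {Q S : Type} [Fintype Q] [Fintype S]
    (𝒜 : BA Q S) (M : Matrix S S ℝ) (D : Set (Q × S)) (y : ↥D → ℝ) (s : S) :
    Submodule ℝ (↥D → ℝ) :=
  Submodule.span ℝ {x : ↥D → ℝ | ∃ w : List S, x = (Delta' D s * DeltaW 𝒜 M D w).mulVec y}

/-- A vector `μ ∈ ℝ^D` is a fibre over `s` if it vanishes outside `Q × {s}`. -/
def IsFibreVec {Q S : Type} (D : Set (Q × S)) (μ : ↥D → ℝ) (s : S) : Prop :=
  ∀ p : ↥D, (p : Q × S).2 ≠ s → μ p = 0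

/-- A pseudo-cut over `s` (with respect to the vector `zD`): a fibre `μ` over `s` with
`μᵀ Δ(w) zD = μᵀ zD` for all `w` such that `s w` is enabled. -/
def IsPseudoCut {Q S : Type} [Fintype Q] [Fintype S]
    (𝒜 : BA Q S) (M : Matrix S S ℝ) (D : Set (Q × S)) (zD : ↥D → ℝ)
    (μ : ↥D → ℝ) (s : S) : Prop :=
  IsFibreVec D μ s ∧
  ∀ w : List S, Enabled M (s :: w) → μ ⬝ᵥ (DeltaW 𝒜 M D w).mulVec zD = μ ⬝ᵥ zD

/-- A `Co(d)`-pseudo-cut: a pseudo-cut over `d.2` that is nonzero at `d` and vanishes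
outside `Co(d)`. -/
def IsCoPseudoCut {Q S : Type} [Fintype Q] [Fintype S]
    (𝒜 : BA Q S) (M : Matrix S S ℝ) (D : Set (Q × S)) (zD : ↥D → ℝ)
    (d : Q × S) (hd : d ∈ D) (μ : ↥D → ℝ) : Prop :=
  IsPseudoCut 𝒜 M D zD μ d.2 ∧ μ ⟨d, hd⟩ ≠ 0 ∧
  ∀ e : ↥D, (e : Q × S) ∉ Co 𝒜 M D d → μ e = 0

/-- Auxiliary order: shortlex on reversed words. -/
def revLT {S : Type} [LinearOrder S] : List S → List S → Prop
  | [], u => u ≠ []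
  | _ :: _, [] => False
  | a :: v, b :: w =>
      (a :: v).length < (b :: w).length ∨
      ((a :: v).length = (b :: w).length ∧ (a < b ∨ (a = b ∧ revLT v w)))

/-- The order `≪` on words: shortlex, but with words read from right to left. -/
def wordLT {S : Type} [LinearOrder S] (u v : List S) : Prop :=
  revLT u.reverse v.reverse

----------------------------------------------------------------
section Aux
variable {Q A : Type}

/-- Splice a finite list in front of an infinite sequence. -/
def spliceF {X : Type} (l : List X) (f : ℕ → X) : ℕ → X :=
  fun i => if h : i < l.length then l.get ⟨i, h⟩ else f (i - l.length)

@[simp] lemma spliceF_nil {X : Type} (f : ℕ → X) : spliceF [] f = f := by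
  funext i; simp [spliceF]

@[simp] lemma spliceF_cons_zero {X : Type} (c : X) (l : List X) (f : ℕ → X) :
    spliceF (c :: l) f 0 = c := by simp [spliceF]

@[simp] lemma spliceF_cons_succ {X : Type} (c : X) (l : List X) (f : ℕ → X) (i : ℕ) :
    spliceF (c :: l) f (i + 1) = spliceF l f i := by
  simp only [spliceF, List.length_cons]
  by_cases h : i < l.length
  · rw [dif_pos (by omega), dif_pos h]; rfl
  · rw [dif_neg (by omega), dif_neg h]; congr 1; omega

lemma spliceF_ge {X : Type} (l : List X) (f : ℕ → X) {i : ℕ} (h : l.length ≤ i) :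
    spliceF l f i = f (i - l.length) := by
  simp [spliceF, Nat.not_lt.mpr h]

lemma spliceF_lt {X : Type} (l : List X) (f : ℕ → X) {i : ℕ} (h : i < l.length) :
    spliceF l f i = l.get ⟨i, h⟩ := by
  simp [spliceF, h]

lemma isRun_head (𝒜 : BA Q A) {q r : Q} {w : List A} {ρ : List Q}
    (h : 𝒜.IsRun q w ρ r) : ∃ t, ρ = q :: t := by
  cases w with
  | nil => exact ⟨[], h.2⟩
  | cons a w => obtain ⟨q', ρ', rfl, _, _⟩ := h; exact ⟨ρ', rfl⟩

lemma isRun_length (𝒜 : BA Q A) : ∀ {w : List A} {q r : Q} {ρ : List Q},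
    𝒜.IsRun q w ρ r → ρ.length = w.length + 1
  | [], q, r, ρ, h => by rw [h.2]; simp
  | a :: w, q, r, ρ, h => by
      obtain ⟨q', ρ', rfl, _, h'⟩ := h
      simp [isRun_length 𝒜 h']

lemma isRun_last (𝒜 : BA Q A) : ∀ {w : List A} {q r : Q} {ρ : List Q},
    𝒜.IsRun q w ρ r → ρ.getLast? = some r
  | [], q, r, ρ, h => by rw [h.2, h.1]; rfl
  | a :: w, q, r, ρ, h => by
      obtain ⟨q', ρ', rfl, _, h'⟩ := h
      obtain ⟨t, rfl⟩ := isRun_head 𝒜 h'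
      rw [List.getLast?_cons_cons]
      exact isRun_last 𝒜 h'

/-- Splicing a finite run with a matching infinite run. -/
lemma splice_run (𝒜 : BA Q A) : ∀ (w : List A) (q r : Q) (ρ : List Q) (x : ℕ → A) (τ : ℕ → Q),
    𝒜.IsRun q w ρ r → τ 0 = r → (∀ i, τ (i + 1) ∈ 𝒜.delta (τ i) (x i)) →
    spliceF ρ.dropLast τ 0 = q ∧
    ∀ i, spliceF ρ.dropLast τ (i + 1) ∈ 𝒜.delta (spliceF ρ.dropLast τ i) (spliceF w x i)
  | [], q, r, ρ, x, τ, h, h0, hs => by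
      obtain ⟨rfl, rfl⟩ := h
      simp only [List.dropLast_singleton, spliceF_nil]
      exact ⟨h0, hs⟩
  | a :: w, q, r, ρ, x, τ, h, h0, hs => by
      obtain ⟨q', ρ', rfl, hq', h'⟩ := h
      obtain ⟨t, rfl⟩ := isRun_head 𝒜 h'
      have IH := splice_run 𝒜 w q' r (q' :: t) x τ h' h0 hs
      rw [List.dropLast_cons₂]
      refine ⟨by simp, fun i => ?_⟩
      cases i with
      | zero => simpa [IH.1] using hq'
      | succ i => simpa using IH.2 i

/-- Prefixes of infinite runs are finite runs. -/
lemma prefix_isRun (𝒜 : BA Q A) (w : ℕ → A) (ρ : ℕ → Q)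
    (hs : ∀ i, ρ (i + 1) ∈ 𝒜.delta (ρ i) (w i)) :
    ∀ (n k : ℕ), 𝒜.IsRun (ρ k) (List.ofFn fun i : Fin n => w (k + i))
      (List.ofFn fun i : Fin (n + 1) => ρ (k + i)) (ρ (k + n)) := by
  intro n
  induction n with
  | zero => intro k; exact ⟨rfl, by simp⟩
  | succ n IH =>
      intro k
      have hw : (List.ofFn fun i : Fin (n + 1) => w (k + ↑i)) =
          w k :: List.ofFn fun i : Fin n => w ((k + 1) + ↑i) := by
        rw [List.ofFn_succ]
        simp only [Fin.val_zero, Nat.add_zero, Fin.val_succ]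
        congr 1
        refine congrArg List.ofFn ?_
        funext i
        congr 1
        omega
      have hρ : (List.ofFn fun i : Fin (n + 1 + 1) => ρ (k + ↑i)) =
          ρ k :: List.ofFn fun i : Fin (n + 1) => ρ ((k + 1) + ↑i) := by
        rw [List.ofFn_succ]
        simp only [Fin.val_zero, Nat.add_zero, Fin.val_succ]
        congr 1
        refine congrArg List.ofFn ?_
        funext i
        congr 1
        omega
      rw [hw, hρ]
      have h3 : k + (n + 1) = (k + 1) + n := by omega
      rw [h3]
      exact ⟨ρ (k + 1), _, rfl, hs k, IH (k + 1)⟩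

lemma inf_shift {P : ℕ → Prop} (h : {i | P i}.Infinite) (n : ℕ) : {i | P (n + i)}.Infinite := by
  have h2 : ({i | P i} \ Set.Iio n).Infinite := h.diff (Set.finite_Iio n)
  have hr : ({i | P i} \ Set.Iio n) ⊆ Set.range (fun i => n + i) := by
    rintro m ⟨_, hm⟩
    simp only [Set.mem_Iio, not_lt] at hm
    exact ⟨m - n, by show n + (m - n) = m; omega⟩
  exact (h2.preimage hr).mono fun i hi => hi.1

lemma inf_splice {τ : ℕ → Q} {qa : Q} (l : List Q) (h : {i | τ i = qa}.Infinite) :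
    {i | spliceF l τ i = qa}.Infinite := by
  have him := h.image (f := fun i => i + l.length)
    (Set.injOn_of_injective (fun a b => by omega))
  refine him.mono ?_
  rintro j ⟨i, hi, rfl⟩
  simpa [spliceF_ge l τ (by omega : l.length ≤ i + l.length)] using hi

end Aux

----------------------------------------------------------------
section Main
variable {Q A : Type}

/-- Restriction of an automaton to a set of states. -/
def baRestrict (𝒜 : BA Q A) (S : Set Q) : BA S A where
  delta := fun q a => {r | (r : Q) ∈ 𝒜.delta q a}
  init := {q | (q : Q) ∈ 𝒜.init}
  acc := {q | (q : Q) ∈ 𝒜.acc}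

lemma baRestrict_isRun (𝒜 : BA Q A) (S : Set Q) : ∀ {w : List A} {q r : S} {ρ : List S},
    (baRestrict 𝒜 S).IsRun q w ρ r → 𝒜.IsRun q.val w (ρ.map Subtype.val) r.val
  | [], q, r, ρ, h => by
      obtain ⟨h1, rfl⟩ := h
      exact ⟨congrArg _ h1, by simp⟩
  | a :: w, q, r, ρ, h => by
      obtain ⟨q', ρ', rfl, hq, h'⟩ := h
      exact ⟨q'.val, ρ'.map Subtype.val, by simp, hq, baRestrict_isRun 𝒜 S h'⟩

lemma baRestrict_accRun_down (𝒜 : BA Q A) (S : Set Q) {w : ℕ → A} {ρ : ℕ → S}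
    (h : (baRestrict 𝒜 S).AccRun w ρ) : 𝒜.AccRun w (fun i => (ρ i).val) := by
  obtain ⟨⟨h0, hs⟩, qa, hqa, hinf⟩ := h
  refine ⟨⟨h0, hs⟩, qa.val, hqa, hinf.mono fun i hi => ?_⟩
  simp only [Set.mem_setOf_eq] at hi ⊢
  rw [hi]

/-- Gluing: initial finite run, then finite run, then accepting infinite run. -/
lemma glue_accRun (𝒜 : BA Q A) {q₀ q r : Q} {u w : List A} {σ ρ : List Q}
    {x : ℕ → A} {τ : ℕ → Q}
    (h0 : q₀ ∈ 𝒜.init) (hσ : 𝒜.IsRun q₀ u σ q) (hρ : 𝒜.IsRun q w ρ r)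
    (hτ : (𝒜.fromState r).AccRun x τ) :
    𝒜.AccRun (spliceF u (spliceF w x)) (spliceF σ.dropLast (spliceF ρ.dropLast τ)) := by
  obtain ⟨⟨hτ0, hτs⟩, qa, hqa, hinf⟩ := hτ
  have hτ0' : τ 0 = r := hτ0
  have S1 := splice_run 𝒜 w q r ρ x τ hρ hτ0' hτs
  have S2 := splice_run 𝒜 u q₀ q σ (spliceF w x) (spliceF ρ.dropLast τ) hσ S1.1 S1.2
  exact ⟨⟨by rw [S2.1]; exact h0, S2.2⟩, qa, hqa, inf_splice _ (inf_splice _ hinf)⟩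


/-- every UBA has an equivalent diamond-free UBA with at most as many
states and transitions. -/
theorem stmt_0 {Q Alph : Type} [Finite Q] [Finite Alph]
    (𝒜 : BA Q Alph) (hU : 𝒜.Unambiguous) :
    ∃ (Q' : Type) (_ : Finite Q') (𝒜' : BA Q' Alph),
      𝒜'.Unambiguous ∧
      Nat.card Q' ≤ Nat.card Q ∧
      𝒜'.numTrans ≤ 𝒜.numTrans ∧
      𝒜'.Lang = 𝒜.Lang ∧
      ¬ 𝒜'.HasDiamond := by
  classical
  set U : Set Q := {q | (∃ q₀ ∈ 𝒜.init, ∃ w ρ, 𝒜.IsRun q₀ w ρ q) ∧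
    ∃ x τ, (𝒜.fromState q).AccRun x τ} with hUdef
  refine ⟨U, inferInstance, baRestrict 𝒜 U, ?_, ?_, ?_, ?_, ?_⟩
  · -- Unambiguous
    intro w ρ₁ ρ₂ h1 h2
    have := hU w _ _ (baRestrict_accRun_down 𝒜 U h1) (baRestrict_accRun_down 𝒜 U h2)
    funext i
    exact Subtype.ext (congrFun this i)
  · -- card
    exact Nat.card_le_card_of_injective Subtype.val Subtype.val_injective
  · -- numTrans
    unfold BA.numTrans
    set T' : Set (↥U × ↥U) := {p | ∃ a, p.2 ∈ (baRestrict 𝒜 U).delta p.1 a}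
    set T : Set (Q × Q) := {p | ∃ a, p.2 ∈ 𝒜.delta p.1 a}
    have hinj : Function.Injective (fun p : ↥U × ↥U => ((p.1 : Q), (p.2 : Q))) := by
      intro p1 p2 h
      simp only [Prod.mk.injEq] at h
      exact Prod.ext (Subtype.ext h.1) (Subtype.ext h.2)
    have himg : (fun p : ↥U × ↥U => ((p.1 : Q), (p.2 : Q))) '' T' ⊆ T := by
      rintro _ ⟨p, ⟨a, ha⟩, rfl⟩
      exact ⟨a, ha⟩
    calc T'.ncard = ((fun p : ↥U × ↥U => ((p.1 : Q), (p.2 : Q))) '' T').ncard :=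
          (Set.ncard_image_of_injective T' hinj).symm
      _ ≤ T.ncard := Set.ncard_le_ncard himg (Set.toFinite T)
  · -- Lang
    ext w
    constructor
    · rintro ⟨ρ, h⟩
      exact ⟨_, baRestrict_accRun_down 𝒜 U h⟩
    · rintro ⟨ρ, h⟩
      obtain ⟨⟨h0, hs⟩, qa, hqa, hinf⟩ := h
      have hmem : ∀ n, ρ n ∈ U := by
        intro n
        constructor
        · have hpre := prefix_isRun 𝒜 w ρ hs n 0
          rw [Nat.zero_add] at hpre
          exact ⟨ρ 0, h0, _, _, hpre⟩
        · refine ⟨fun i => w (n + i), fun i => ρ (n + i), ⟨⟨?_, fun i => hs (n + i)⟩,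
            qa, hqa, inf_shift hinf n⟩⟩
          show ρ (n + 0) ∈ ({ρ n} : Set Q)
          rw [Nat.add_zero]
          rfl
      obtain ⟨i0, hi0⟩ := hinf.nonempty
      refine ⟨fun i => ⟨ρ i, hmem i⟩, ⟨h0, hs⟩, ⟨qa, hi0 ▸ hmem i0⟩, hqa, ?_⟩
      refine hinf.mono ?_ |>.mono fun i hi => hi
      intro i hi
      exact Subtype.ext hi
  · -- no diamond
    rintro ⟨q, r, w, ρ₁, ρ₂, hne, h1, h2⟩
    set l1 := ρ₁.map (Subtype.val) with hl1
    set l2 := ρ₂.map (Subtype.val) with hl2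
    have H1 := baRestrict_isRun 𝒜 U h1
    have H2 := baRestrict_isRun 𝒜 U h2
    have hne' : l1 ≠ l2 :=
      fun h => hne ((List.map_injective_iff.mpr Subtype.val_injective) h)
    have hlen1 : l1.length = w.length + 1 := isRun_length 𝒜 H1
    have hlen2 : l2.length = w.length + 1 := isRun_length 𝒜 H2
    obtain ⟨⟨q₀, hq0, u, σ, hσ⟩, -⟩ := q.2
    obtain ⟨-, x, τ, hτ⟩ := r.2
    have R1 := glue_accRun 𝒜 hq0 hσ H1 hτ
    have R2 := glue_accRun 𝒜 hq0 hσ H2 hτ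
    have heq := hU _ _ _ R1 R2
    -- find index of difference
    have hdif : ∃ k : ℕ, (l1[k]? : Option Q) ≠ (l2[k]? : Option Q) := by
      by_contra hc
      push_neg at hc
      exact hne' (List.ext_getElem? hc)
    obtain ⟨k, hkne⟩ := hdif
    have hk1 : k < l1.length := by
      by_contra h
      apply hkne
      rw [List.getElem?_eq_none (by omega), List.getElem?_eq_none (by omega)]
    have hk2 : k < l2.length := by omega
    have hklt : k < w.length := by
      rcases Nat.lt_or_ge k w.length with h | h
      · exact h
      · exfalso
        have hk : k = w.length := by omega
        have e1 := isRun_last 𝒜 H1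
        have e2 := isRun_last 𝒜 H2
        rw [List.getLast?_eq_getElem?] at e1 e2
        have e1' : l1[k]? = some (r : Q) := by
          rw [show k = l1.length - 1 by omega]; exact e1
        have e2' : l2[k]? = some (r : Q) := by
          rw [show k = l2.length - 1 by omega]; exact e2
        exact hkne (e1'.trans e2'.symm)
    -- evaluate the two runs at position σ.dropLast.length + k
    have hval := congrFun heq (σ.dropLast.length + k)
    have ev : ∀ (l : List Q) (hl : l.length = w.length + 1),
        spliceF σ.dropLast (spliceF l.dropLast τ) (σ.dropLast.length + k) = l[k]'(by omega) := by
      intro l hl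
      rw [spliceF_ge _ _ (Nat.le_add_right _ _), Nat.add_sub_cancel_left,
        spliceF_lt _ _ (show k < l.dropLast.length by simp [List.length_dropLast]; omega)]
      simp [List.getElem_dropLast]
    rw [ev l1 hlen1, ev l2 hlen2] at hval
    apply hkne
    rw [List.getElem?_eq_getElem hk1, List.getElem?_eq_getElem hk2, hval]
end Main
end

section
/- Let D be a recurrent SCC of B and d = ⟨q,s⟩ ∈ D. Then for every e ∈ Co(d) there exists a word w ∈ S* of length at most |Q|·|D| such that d⇒w is defined and {d, e} ⊆ d⇒w. -/
open Matrix MeasureTheory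

attribute [local instance] Classical.propDecidable

section Aux


variable {Q S : Type}

/-- A path in the automaton restricted to `D`, along word `w`. -/
def PathTo (𝒜 : BA Q S) (D : Set (Q × S)) (q : Q × S) (w : List S) (p : Q × S) : Prop :=
  ∃ ρ : ℕ → Q × S, ρ 0 = q ∧ ρ w.length = p ∧
    ∀ k (hk : k < w.length), ρ (k + 1) ∈ D ∧
      (ρ (k + 1)).1 ∈ 𝒜.delta (ρ k).1 (ρ k).2 ∧ (ρ (k + 1)).2 = w[k]

lemma mem_fibRun_iff (𝒜 : BA Q S) (D : Set (Q × S)) :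
    ∀ (w : List S) (f : Set (Q × S)) (p : Q × S),
      p ∈ fibRun 𝒜 D f w ↔ ∃ q ∈ f, PathTo 𝒜 D q w p := by
  intro w
  induction w with
  | nil =>
    intro f p
    constructor
    · intro hp
      exact ⟨p, hp, fun _ => p, rfl, rfl, fun k hk => absurd hk (by simp)⟩
    · rintro ⟨q, hq, ρ, h0, h1, -⟩
      simpa [fibRun, ← h1, h0] using hq
  | cons t w ih =>
    intro f p
    show p ∈ fibRun 𝒜 D (fibStep 𝒜 D f t) w ↔ _
    rw [ih]
    constructor
    · rintro ⟨r, ⟨hrD, hrt, q, hqf, hrδ⟩, ρ, h0, h1, hstep⟩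
      refine ⟨q, hqf, fun k => Nat.rec q (fun k _ => ρ k) k, rfl, ?_, ?_⟩
      · simpa [List.length_cons] using h1
      · intro k hk
        cases k with
        | zero =>
          simpa [h0, hrD, hrt, hrδ] using hrt
        | succ k =>
          have hk' : k < w.length := by simpa [List.length_cons] using hk
          have := hstep k hk'
          simpa using this
    · rintro ⟨q, hqf, ρ, h0, h1, hstep⟩
      have h00 : (0:ℕ) < (t :: w).length := by simp
      obtain ⟨hD1, hδ1, ht1⟩ := hstep 0 h00
      refine ⟨ρ 1, ⟨hD1, by simpa using ht1, q, hqf, by rwa [h0] at hδ1⟩,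
        fun k => ρ (k + 1), rfl, ?_, ?_⟩
      · simpa [List.length_cons] using h1
      · intro k hk
        have hk' : k + 1 < (t :: w).length := by simpa using Nat.succ_lt_succ hk
        have := hstep (k + 1) hk'
        simpa using this

variable (M : Matrix S S ℝ)

lemma enabled_iff_path (w : List S) (ρ : ℕ → Q × S) (s0 : S) (h0 : (ρ 0).2 = s0)
    (hsnd : ∀ k (hk : k < w.length), (ρ (k + 1)).2 = w[k]) :
    Enabled M (s0 :: w) ↔ ∀ k < w.length, 0 < M (ρ k).2 (ρ (k + 1)).2 := by
  have hget : ∀ k (hk : k < w.length + 1),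
      (s0 :: w).get ⟨k, by simpa using hk⟩ = (ρ k).2 := by
    intro k hk
    cases k with
    | zero => simpa using h0.symm
    | succ k =>
      have hk' : k < w.length := Nat.lt_of_succ_lt_succ hk
      simp only [List.get_cons_succ]
      rw [List.get_eq_getElem]
      exact (hsnd k hk').symm
  simp only [List.get_eq_getElem] at hget
  rw [Enabled]
  change List.IsChain _ (s0 :: w) ↔ _
  rw [List.isChain_iff_getElem]
  constructor
  · intro h k hk
    have := h k (by simpa using hk)
    rwa [hget k (by omega), hget (k+1) (by omega)] at this
  · intro h k hk
    have hk' : k < w.length := by simpa using hk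
    rw [hget k (by omega), hget (k+1) (by omega)]
    exact h k hk'

/-- The cut function: skip the segment between `i` and `j`. -/
def cutFun (ρ : ℕ → Q × S) (i j : ℕ) : ℕ → Q × S :=
  fun k => if k < i then ρ k else ρ (k + (j - i))

lemma cutFun_lt {ρ : ℕ → Q × S} {i j k : ℕ} (h : k < i) : cutFun ρ i j k = ρ k :=
  if_pos h

lemma cutFun_ge {ρ : ℕ → Q × S} {i j k : ℕ} (h : i ≤ k) :
    cutFun ρ i j k = ρ (k + (j - i)) := if_neg (by omega)

lemma cutFun_succ_le {ρ : ℕ → Q × S} {i j k : ℕ} (hij : i ≤ j) (heq : ρ i = ρ j)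
    (h : k < i) : cutFun ρ i j (k + 1) = ρ (k + 1) := by
  rcases Nat.lt_or_ge (k+1) i with h'|h'
  · exact cutFun_lt h'
  · have hi : k + 1 = i := by omega
    rw [cutFun_ge h', hi]
    rw [show i + (j - i) = j by omega]
    exact heq.symm

lemma cut_step (P : (Q × S) → (Q × S) → Prop) (ρ : ℕ → Q × S) {n i j : ℕ}
    (hij : i < j) (hjn : j ≤ n) (heq : ρ i = ρ j)
    (hstep : ∀ k < n, P (ρ k) (ρ (k + 1))) :
    ∀ k < n - (j - i), P (cutFun ρ i j k) (cutFun ρ i j (k + 1)) := by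
  intro k hk
  rcases Nat.lt_or_ge k i with h|h
  · rw [cutFun_lt h, cutFun_succ_le (le_of_lt hij) heq h]
    exact hstep k (by omega)
  · rw [cutFun_ge h, cutFun_ge (by omega : i ≤ k + 1),
      show k + 1 + (j - i) = k + (j - i) + 1 by omega]
    exact hstep (k + (j - i)) (by omega)

end Aux

section Key

variable {Q S : Type} [Fintype Q] [Fintype S]

lemma cutFun_zero {ρ : ℕ → Q × S} {i j : ℕ} (heq : ρ i = ρ j) :
    cutFun ρ i j 0 = ρ 0 := by
  rcases Nat.eq_zero_or_pos i with h | h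
  · subst h
    rw [cutFun_ge (le_refl 0)]
    simpa using heq.symm
  · exact cutFun_lt h

lemma key (𝒜 : BA Q S) (M : Matrix S S ℝ) (D : Set (Q × S)) (d e : Q × S)
    (hd : d ∈ D) :
    ∀ n (w : List S), w.length = n → Enabled M (d.2 :: w) →
      PathTo 𝒜 D d w d → PathTo 𝒜 D d w e →
      ∃ w' : List S, w'.length ≤ Fintype.card Q * D.ncard ∧
        Enabled M (d.2 :: w') ∧ PathTo 𝒜 D d w' d ∧ PathTo 𝒜 D d w' e := by
  intro n
  induction n using Nat.strong_induction_on with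
  | _ n IH =>
    intro w hw hen hpd hpe
    by_cases hle : w.length ≤ Fintype.card Q * D.ncard
    · exact ⟨w, hle, hen, hpd, hpe⟩
    · -- pigeonhole and cut
      obtain ⟨ρ, hρ0, hρn, hρs⟩ := hpd
      obtain ⟨σ, hσ0, hσn, hσs⟩ := hpe
      subst hw
      set n := w.length with hn
      have hmemρ : ∀ k ≤ n, ρ k ∈ D := by
        intro k hk
        cases k with
        | zero => rw [hρ0]; exact hd
        | succ k => exact (hρs k (by omega)).1
      have hsndeq : ∀ k ≤ n, (σ k).2 = (ρ k).2 := by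
        intro k hk
        cases k with
        | zero => rw [hρ0, hσ0]
        | succ k => rw [(hρs k (by omega)).2.2, (hσs k (by omega)).2.2]
      haveI : Fintype ↥D := (Set.toFinite D).fintype
      have hcardD : Fintype.card ↥D = D.ncard := by
        rw [← Nat.card_coe_set_eq, Nat.card_eq_fintype_card]
      have hcard : Fintype.card (Q × ↥D) < Fintype.card (Fin (n + 1)) := by
        rw [Fintype.card_prod, Fintype.card_fin, hcardD]
        omega
      obtain ⟨a, b, hab, hg⟩ := Fintype.exists_ne_map_eq_of_card_lt
        (fun k : Fin (n + 1) => ((σ (k : ℕ)).1, (⟨ρ (k : ℕ), hmemρ k (by omega)⟩ : ↥D)))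
        hcard
      -- extract i < j with equal pair states
      obtain ⟨i, j, hij, hjn, hρeq, hσ1eq⟩ :
          ∃ i j : ℕ, i < j ∧ j ≤ n ∧ ρ i = ρ j ∧ (σ i).1 = (σ j).1 := by
        have h1 : ρ (a : ℕ) = ρ (b : ℕ) :=
          congrArg Subtype.val (Prod.ext_iff.mp hg).2
        have h2 : (σ (a : ℕ)).1 = (σ (b : ℕ)).1 := (Prod.ext_iff.mp hg).1
        rcases lt_or_gt_of_ne (fun h => hab (Fin.ext h) : (a : ℕ) ≠ (b : ℕ)) with h | h
        · exact ⟨a, b, h, by omega, h1, h2⟩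
        · exact ⟨b, a, h, by omega, h1.symm, h2.symm⟩
      have hσeq : σ i = σ j := by
        have : (σ i).2 = (σ j).2 := by
          rw [hsndeq i (by omega), hsndeq j hjn, hρeq]
        exact Prod.ext hσ1eq this
      set w' : List S := w.take i ++ w.drop j with hw'
      have hlen' : w'.length = n - (j - i) := by
        simp only [hw', List.length_append, List.length_take, List.length_drop]
        omega
      set n' := n - (j - i) with hn'
      have hn'n : n' < n := by omega
      -- getElem of w'
      have hw'get : ∀ k (hk : k < n'),
          w'[k]'(by omega) = if h : k < i then w[k]'(by omega)
            else w[k + (j - i)]'(by omega) := by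
        intro k hk
        split
        · next h =>
          rw [List.getElem_append_left (by simp only [List.length_take]; omega),
            List.getElem_take]
        · next h =>
          rw [List.getElem_append_right (by simp only [List.length_take]; omega)]
          rw [List.getElem_drop]
          congr 1
          simp only [List.length_take]
          omega
      -- snd condition for a cut path
      have sndcut : ∀ (τ : ℕ → Q × S),
          (∀ k (hk : k < n), (τ (k + 1)).2 = w[k]) → τ i = τ j →
          ∀ k (hk : k < n'), (cutFun τ i j (k + 1)).2 = w'[k]'(by omega) := by
        intro τ hτ hτeq k hk
        rw [hw'get k hk]
        split
        · next h =>
          rw [cutFun_succ_le (le_of_lt hij) hτeq h]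
          exact hτ k (by omega)
        · next h =>
          rw [cutFun_ge (by omega : i ≤ k + 1),
            show k + 1 + (j - i) = k + (j - i) + 1 by omega]
          exact hτ (k + (j - i)) (by omega)
      -- endpoints of cut paths
      have endcut : ∀ (τ : ℕ → Q × S), τ i = τ j → cutFun τ i j n' = τ n := by
        intro τ hτeq
        rw [cutFun_ge (by omega : i ≤ n')]
        congr 1
        omega
      -- PathTo for cut ρ
      have hpd' : PathTo 𝒜 D d w' d := by
        refine ⟨cutFun ρ i j, by rw [cutFun_zero hρeq, hρ0], ?_, ?_⟩
        · rw [hlen', endcut ρ hρeq, hρn]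
        · intro k hk
          have hk' : k < n' := by omega
          have hstep := cut_step (fun a b => b ∈ D ∧ b.1 ∈ 𝒜.delta a.1 a.2) ρ hij hjn
            hρeq (fun k hk => ⟨(hρs k hk).1, (hρs k hk).2.1⟩) k (by omega)
          exact ⟨hstep.1, hstep.2,
            sndcut ρ (fun k hk => (hρs k hk).2.2) hρeq k hk'⟩
      have hpe' : PathTo 𝒜 D d w' e := by
        refine ⟨cutFun σ i j, by rw [cutFun_zero hσeq, hσ0], ?_, ?_⟩
        · rw [hlen', endcut σ hσeq, hσn]
        · intro k hk
          have hk' : k < n' := by omega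
          have hstep := cut_step (fun a b => b ∈ D ∧ b.1 ∈ 𝒜.delta a.1 a.2) σ hij hjn
            hσeq (fun k hk => ⟨(hσs k hk).1, (hσs k hk).2.1⟩) k (by omega)
          exact ⟨hstep.1, hstep.2,
            sndcut σ (fun k hk => (hσs k hk).2.2) hσeq k hk'⟩
      -- enabledness of the cut word
      have hen' : Enabled M (d.2 :: w') := by
        have hpos : ∀ k < n, 0 < M (ρ k).2 (ρ (k + 1)).2 :=
          (enabled_iff_path M w ρ d.2 (by rw [hρ0]) fun k hk => (hρs k hk).2.2).mp hen
        have hpos' := cut_step (fun a b => 0 < M a.2 b.2) ρ hij hjn hρeq hpos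
        exact (enabled_iff_path M w' (cutFun ρ i j) d.2
          (by rw [cutFun_zero hρeq, hρ0])
          (fun k hk => sndcut ρ (fun k hk => (hρs k hk).2.2) hρeq k (by omega))).mpr
          (fun k hk => hpos' k (by omega))
      exact IH n' hn'n w' (by omega) hen' hpd' hpe'

end Key

/-- every `e ∈ Co(d)` is witnessed by a word of length at most `|Q|·|D|`. -/
theorem stmt_5 {Q S : Type} [Fintype Q] [Fintype S]
    (𝒜 : BA Q S) (M : Matrix S S ℝ) (hM : IsMarkov M)
    (hU : 𝒜.Unambiguous) (hND : ¬ 𝒜.HasDiamond) (hAR : 𝒜.AllReachable)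
    (D : Set (Q × S)) (hD : IsSCC (Bmat 𝒜 M) D) (hrec : RecurrentSCC 𝒜 M D)
    (d : Q × S) (hd : d ∈ D) :
    ∀ e ∈ Co 𝒜 M D d, ∃ w : List S,
      w.length ≤ Fintype.card Q * D.ncard ∧
      Enabled M (d.2 :: w) ∧
      d ∈ fibRun 𝒜 D {d} w ∧ e ∈ fibRun 𝒜 D {d} w := by
  intro e he
  obtain ⟨heD, w, hen, hdw, hew⟩ := he
  obtain ⟨q1, hq1, hpd⟩ := (mem_fibRun_iff 𝒜 D w {d} d).mp hdw
  rw [Set.mem_singleton_iff] at hq1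
  subst hq1
  obtain ⟨q2, hq2, hpe⟩ := (mem_fibRun_iff 𝒜 D w {q1} e).mp hew
  rw [Set.mem_singleton_iff] at hq2
  subst hq2
  obtain ⟨w', h1, h2, h3, h4⟩ := key 𝒜 M D q2 e hd w.length w rfl hen hpd hpe
  exact ⟨w', h1, h2, (mem_fibRun_iff 𝒜 D w' {q2} q2).mpr ⟨q2, rfl, h3⟩,
    (mem_fibRun_iff 𝒜 D w' {q2} e).mpr ⟨q2, rfl, h4⟩⟩
end

section
/- Let D be a recurrent SCC of B and d ∈ D. Then there exists a word w ∈ S* of length at most |Q|²·|D| such that d⇒w is defined, d ∈ d⇒w, and d⇒w is a cut. -/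
open Matrix MeasureTheory

attribute [local instance] Classical.propDecidable

/-! ### Auxiliary development for Statement 6 -/

set_option linter.unusedSectionVars false

namespace Stmt6

open Relation

variable {Q S : Type} [Fintype Q] [Fintype S]

section FibRun

variable (𝒜 : BA Q S) (D : Set (Q × S))

lemma fibRun_append (f : Set (Q × S)) (x y : List S) :
    fibRun 𝒜 D f (x ++ y) = fibRun 𝒜 D (fibRun 𝒜 D f x) y := by
  induction x generalizing f with
  | nil => rfl
  | cons t x ih => simp [fibRun, ih]

lemma fibStep_mono {f g : Set (Q × S)} (h : f ⊆ g) (t : S) :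
    fibStep 𝒜 D f t ⊆ fibStep 𝒜 D g t := by
  rintro p ⟨hpD, hpt, e, he, hdel⟩
  exact ⟨hpD, hpt, e, h he, hdel⟩

lemma fibRun_mono {f g : Set (Q × S)} (h : f ⊆ g) (x : List S) :
    fibRun 𝒜 D f x ⊆ fibRun 𝒜 D g x := by
  induction x generalizing f g with
  | nil => exact h
  | cons t x ih => exact ih (fibStep_mono 𝒜 D h t)

lemma fibStep_empty (t : S) : fibStep 𝒜 D ∅ t = ∅ := by
  ext p; simp [fibStep]

lemma fibRun_empty (x : List S) : fibRun 𝒜 D ∅ x = ∅ := by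
  induction x with
  | nil => rfl
  | cons t x ih => simp [fibRun, fibStep_empty, ih]

lemma fibStep_subset_D (f : Set (Q × S)) (t : S) : fibStep 𝒜 D f t ⊆ D :=
  fun _ hp => hp.1

lemma fibRun_subset_D (f : Set (Q × S)) {x : List S} (hx : x ≠ []) :
    fibRun 𝒜 D f x ⊆ D := by
  induction x generalizing f with
  | nil => exact absurd rfl hx
  | cons t x ih =>
    cases x with
    | nil => exact fibStep_subset_D 𝒜 D f t
    | cons t' x' => exact ih _ (List.cons_ne_nil _ _)

lemma mem_fibRun_getLastD (f : Set (Q × S)) {x : List S} (hx : x ≠ []) (a₀ : S)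
    {e : Q × S} (he : e ∈ fibRun 𝒜 D f x) : e.2 = x.getLastD a₀ := by
  induction x generalizing f a₀ with
  | nil => exact absurd rfl hx
  | cons t x ih =>
    cases x with
    | nil => exact he.2.1
    | cons t' x' =>
      have := ih (f := fibStep 𝒜 D f t) (a₀ := t) (by simp) he
      rwa [List.getLastD_cons]

lemma fibStep_union (f : Set (Q × S)) (t : S) :
    fibStep 𝒜 D f t = ⋃ e ∈ f, fibStep 𝒜 D {e} t := by
  ext p
  constructor
  · rintro ⟨hpD, hpt, e, he, hdel⟩
    exact Set.mem_biUnion he ⟨hpD, hpt, e, rfl, hdel⟩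
  · intro hp
    obtain ⟨e, he, hpD, hpt, e', he', hdel⟩ := Set.mem_iUnion₂.1 hp
    rcases he' with rfl
    exact ⟨hpD, hpt, e', he, hdel⟩

lemma mem_fibRun_source (f : Set (Q × S)) (x : List S) {e : Q × S}
    (he : e ∈ fibRun 𝒜 D f x) : ∃ e₀ ∈ f, e ∈ fibRun 𝒜 D {e₀} x := by
  induction x generalizing f with
  | nil => exact ⟨e, he, rfl⟩
  | cons t x ih =>
    obtain ⟨e₁, he₁, hrec⟩ := ih (f := fibStep 𝒜 D f t) he
    have := (by rw [fibStep_union] at he₁; exact he₁ :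
      e₁ ∈ ⋃ e₀ ∈ f, fibStep 𝒜 D {e₀} t)
    obtain ⟨e₀, he₀, he₁'⟩ := Set.mem_iUnion₂.1 this
    exact ⟨e₀, he₀, fibRun_mono 𝒜 D (by intro z hz; rcases hz with rfl; exact he₁') x hrec⟩

end FibRun

section Weight

variable (M : Matrix S S ℝ)

/-- Weight of a word `x` read from letter `t`. -/
def Mw : S → List S → ℝ
  | _, [] => 1
  | t, t' :: x => M t t' * Mw t' x

@[simp] lemma Mw_nil (t : S) : Mw M t [] = 1 := rfl

@[simp] lemma Mw_cons (t t' : S) (x : List S) :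
    Mw M t (t' :: x) = M t t' * Mw M t' x := rfl

lemma Mw_nonneg (hM : IsMarkov M) (t : S) (x : List S) : 0 ≤ Mw M t x := by
  induction x generalizing t with
  | nil => norm_num [Mw]
  | cons t' x ih => exact mul_nonneg (hM.1 t t') (ih t')

lemma Mw_le_one (hM : IsMarkov M) (t : S) (x : List S) : Mw M t x ≤ 1 := by
  induction x generalizing t with
  | nil => norm_num [Mw]
  | cons t' x ih =>
    have h1 : M t t' ≤ 1 := by
      have := hM.2 t
      calc M t t' ≤ ∑ u, M t u := by
            exact Finset.single_le_sum (fun u _ => hM.1 t u) (Finset.mem_univ t')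
        _ = 1 := this
    exact mul_le_one₀ h1 (Mw_nonneg M hM t' x) (ih t')

lemma Mw_append (t : S) (x y : List S) :
    Mw M t (x ++ y) = Mw M t x * Mw M (x.getLastD t) y := by
  induction x generalizing t with
  | nil => simp
  | cons t' x ih =>
    rw [List.cons_append, Mw_cons, Mw_cons, ih, List.getLastD_cons, mul_assoc]

lemma Mw_pos_of_enabled {t : S} {x : List S} (h : Enabled M (t :: x)) :
    0 < Mw M t x := by
  induction x generalizing t with
  | nil => norm_num [Mw]
  | cons t' x ih =>
    have h2 := List.isChain_cons_cons.1 h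
    exact mul_pos h2.1 (ih h2.2)

lemma enabled_cons_of_cons {t t' : S} {x : List S} (h : Enabled M (t :: t' :: x)) :
    Enabled M (t' :: x) := (List.isChain_cons_cons.1 h).2

lemma enabled_getLastD {t : S} {x : List S} (h : Enabled M (t :: x)) {y : List S}
    (hy : Enabled M (x.getLastD t :: y)) : Enabled M (t :: (x ++ y)) := by
  induction x generalizing t with
  | nil => simpa using hy
  | cons t' x ih =>
    have h2 := List.isChain_cons_cons.1 h
    rw [List.cons_append]
    exact List.isChain_cons_cons.2 ⟨h2.1, ih h2.2 (by rwa [List.getLastD_cons] at hy)⟩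

end Weight

section Words

variable (S)

/-- The finite set of words of length `n`. -/
noncomputable def Wn : ℕ → Finset (List S)
  | 0 => {[]}
  | n + 1 => Finset.univ.biUnion (fun t => (Wn n).image (List.cons t))

variable {S}

lemma mem_Wn {n : ℕ} {x : List S} : x ∈ Wn S n ↔ x.length = n := by
  induction n generalizing x with
  | zero => simp [Wn, List.length_eq_zero_iff]
  | succ n ih =>
    simp only [Wn, Finset.mem_biUnion, Finset.mem_univ, true_and, Finset.mem_image]
    constructor
    · rintro ⟨t, y, hy, rfl⟩
      simp [ih.1 hy]
    · intro hx
      cases x with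
      | nil => simp at hx
      | cons t y => exact ⟨t, y, ih.2 (by simpa using hx), rfl⟩

lemma sum_Wn_succ {R : Type*} [AddCommMonoid R] (n : ℕ) (F : List S → R) :
    ∑ x ∈ Wn S (n+1), F x = ∑ t, ∑ y ∈ Wn S n, F (t :: y) := by
  rw [show Wn S (n+1) = Finset.univ.biUnion (fun t => (Wn S n).image (List.cons t)) from rfl]
  rw [Finset.sum_biUnion]
  · refine Finset.sum_congr rfl (fun t _ => ?_)
    rw [Finset.sum_image]
    intro a _ b _ h
    simpa using h
  · intro a _ b _ hab
    simp only [Function.onFun]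
    rw [Finset.disjoint_left]
    rintro x hx hx'
    simp only [Finset.mem_image] at hx hx'
    obtain ⟨y, _, rfl⟩ := hx
    obtain ⟨y', _, h⟩ := hx'
    injection h with h3 _
    exact hab h3.symm

lemma sum_Wn_Mw (hM : IsMarkov M) (t : S) (n : ℕ) :
    ∑ x ∈ Wn S n, Mw M t x = 1 := by
  induction n generalizing t with
  | zero => simp [Wn]
  | succ n ih =>
    rw [sum_Wn_succ]
    have : ∀ t' : S, ∑ y ∈ Wn S n, Mw M t (t' :: y) = M t t' := by
      intro t'
      simp only [Mw_cons, ← Finset.mul_sum, ih t']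
      ring
    rw [Finset.sum_congr rfl (fun t' _ => this t')]
    exact hM.2 t

end Words

end Stmt6
namespace Stmt6

/-- Real-valued indicator of a proposition. -/
noncomputable def ind (P : Prop) : ℝ := if P then 1 else 0

lemma ind_nonneg (P : Prop) : 0 ≤ ind P := by
  unfold ind; split <;> norm_num

lemma ind_le_one (P : Prop) : ind P ≤ 1 := by
  unfold ind; split <;> norm_num

lemma ind_of (P : Prop) (h : P) : ind P = 1 := if_pos h

lemma ind_of_not (P : Prop) (h : ¬ P) : ind P = 0 := if_neg h

lemma ind_le_ind {P R : Prop} (h : P → R) : ind P ≤ ind R := by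
  unfold ind
  split
  · rw [if_pos (h (by assumption))]
  · split <;> norm_num

section Reach

variable {α : Type} [Fintype α] (r : α → α → Prop) (a : α)

/-- States reachable from `a` in at most `n` steps. -/
def RN : ℕ → Set α
  | 0 => {a}
  | n + 1 => RN n ∪ {b | ∃ c ∈ RN n, r c b}

lemma RN_succ_subset (n : ℕ) : RN r a n ⊆ RN r a (n + 1) := Set.subset_union_left

lemma RN_subset_of_le {m n : ℕ} (h : m ≤ n) : RN r a m ⊆ RN r a n := by
  induction n with
  | zero => rw [Nat.le_zero.1 h]
  | succ n ih =>
    rcases Nat.lt_or_ge m (n+1) with h'|h'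
    · exact (ih (Nat.lt_succ_iff.1 h')).trans (RN_succ_subset r a n)
    · rw [Nat.le_antisymm h h']

lemma RN_stab {n : ℕ} (h : RN r a (n + 1) = RN r a n) :
    ∀ m, n ≤ m → RN r a m = RN r a n := by
  intro m hm
  induction m with
  | zero => rw [Nat.le_zero.1 hm]
  | succ m ih =>
    rcases Nat.lt_or_ge n (m+1) with h'|h'
    · have hmn := Nat.lt_succ_iff.1 h'
      have heq := ih hmn
      show RN r a m ∪ _ = _
      rw [heq]
      exact h
    · rw [Nat.le_antisymm hm h']

lemma RN_exists_stab : ∃ n ≤ Fintype.card α, RN r a (n + 1) = RN r a n := by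
  by_contra hcon
  push_neg at hcon
  have hgrow : ∀ n ≤ Fintype.card α, n + 1 ≤ (RN r a n).ncard := by
    intro n
    induction n with
    | zero =>
      intro _
      have : a ∈ RN r a 0 := rfl
      have h1 : ({a} : Set α).ncard = 1 := Set.ncard_singleton a
      simp [RN, h1]
    | succ n ih =>
      intro hn
      have hne := hcon n (Nat.le_of_succ_le hn)
      have hsub : RN r a n ⊂ RN r a (n+1) :=
        Set.ssubset_iff_subset_ne.2 ⟨RN_succ_subset r a n, fun h => hne h.symm⟩
      have := Set.ncard_lt_ncard hsub (Set.toFinite _)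
      have h2 := ih (Nat.le_of_succ_le hn)
      omega
  have h3 := hgrow (Fintype.card α) le_rfl
  have h4 : (RN r a (Fintype.card α)).ncard ≤ Fintype.card α := by
    have := Set.ncard_le_ncard (Set.subset_univ (RN r a (Fintype.card α))) (Set.toFinite _)
    rwa [Set.ncard_univ, Nat.card_eq_fintype_card] at this
  omega

lemma mem_RN_of_rtg {b : α} (h : Relation.ReflTransGen r a b) :
    b ∈ RN r a (Fintype.card α) := by
  have : ∃ n, b ∈ RN r a n := by
    induction h with
    | refl => exact ⟨0, rfl⟩
    | tail _ hstep ih =>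
      obtain ⟨n, hn⟩ := ih
      exact ⟨n + 1, Or.inr ⟨_, hn, hstep⟩⟩
  obtain ⟨n, hn⟩ := this
  obtain ⟨n₀, hn₀, hstab⟩ := RN_exists_stab r a
  rcases Nat.le_total n (Fintype.card α) with h'|h'
  · exact RN_subset_of_le r a h' hn
  · have := RN_stab r a hstab n (le_trans hn₀ h')
    rw [this] at hn
    exact RN_subset_of_le r a hn₀ hn

lemma RN_elim (P : ℕ → α → Prop) (h0 : P 0 a)
    (hmono : ∀ n b, P n b → P (n + 1) b)
    (hstep : ∀ n c b, P n c → r c b → P (n + 1) b) :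
    ∀ n b, b ∈ RN r a n → P n b := by
  intro n
  induction n with
  | zero => rintro b rfl; exact h0
  | succ n ih =>
    rintro b (hb | ⟨c, hc, hcb⟩)
    · exact hmono n b (ih b hb)
    · exact hstep n c b (ih c hc) hcb

end Reach

section Surv

variable {Q S : Type} [Fintype Q] [Fintype S]
variable (𝒜 : BA Q S) (M : Matrix S S ℝ) (D : Set (Q × S)) (d : Q × S)

/-- Survival mass: expected indicator that the fibre is nonempty after `n` steps. -/
noncomputable def surv : ℕ → Set (Q × S) → S → ℝ
  | 0, f, _ => ind f.Nonempty
  | n + 1, f, t => ∑ t', M t t' * surv n (fibStep 𝒜 D f t') t'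

/-- Return mass: expected indicator that `d` belongs to the fibre after `n` steps. -/
noncomputable def ret : ℕ → Set (Q × S) → S → ℝ
  | 0, f, _ => ind (d ∈ f)
  | n + 1, f, t => ∑ t', M t t' * ret n (fibStep 𝒜 D f t') t'

variable (hM : IsMarkov M)
include hM

lemma surv_empty (n : ℕ) (t : S) : surv 𝒜 M D n ∅ t = 0 := by
  induction n generalizing t with
  | zero => exact ind_of_not _ (by simp [Set.not_nonempty_empty])
  | succ n ih => simp [surv, fibStep_empty, ih]

lemma surv_nonneg (n : ℕ) (f : Set (Q × S)) (t : S) : 0 ≤ surv 𝒜 M D n f t := by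
  induction n generalizing f t with
  | zero => exact ind_nonneg _
  | succ n ih =>
    exact Finset.sum_nonneg fun t' _ => mul_nonneg (hM.1 t t') (ih _ t')

lemma surv_le_one (n : ℕ) (f : Set (Q × S)) (t : S) : surv 𝒜 M D n f t ≤ 1 := by
  induction n generalizing f t with
  | zero => exact ind_le_one _
  | succ n ih =>
    calc ∑ t', M t t' * surv 𝒜 M D n (fibStep 𝒜 D f t') t'
        ≤ ∑ t', M t t' * 1 := Finset.sum_le_sum fun t' _ =>
          mul_le_mul_of_nonneg_left (ih _ t') (hM.1 t t')
      _ = 1 := by simp [hM.2 t]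

lemma surv_le_ind (n : ℕ) (f : Set (Q × S)) (t : S) :
    surv 𝒜 M D n f t ≤ ind f.Nonempty := by
  rcases Set.eq_empty_or_nonempty f with rfl | hf
  · rw [surv_empty 𝒜 M D hM]
    exact ind_nonneg _
  · rw [ind_of _ hf]
    exact surv_le_one 𝒜 M D hM n f t

lemma surv_succ_le (n : ℕ) (f : Set (Q × S)) (t : S) :
    surv 𝒜 M D (n + 1) f t ≤ surv 𝒜 M D n f t := by
  induction n generalizing f t with
  | zero =>
    calc ∑ t', M t t' * surv 𝒜 M D 0 (fibStep 𝒜 D f t') t'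
        ≤ ∑ t', M t t' * ind f.Nonempty := by
          refine Finset.sum_le_sum fun t' _ => mul_le_mul_of_nonneg_left ?_ (hM.1 t t')
          refine ind_le_ind fun ⟨e, he⟩ => ?_
          obtain ⟨e₀, he₀, _⟩ := he.2.2
          exact ⟨e₀, he₀⟩
      _ = ind f.Nonempty := by
          rw [← Finset.sum_mul, hM.2 t, one_mul]
  | succ n ih =>
    exact Finset.sum_le_sum fun t' _ => mul_le_mul_of_nonneg_left (ih _ t') (hM.1 t t')

lemma surv_add_le (n m : ℕ) (f : Set (Q × S)) (t : S) :
    surv 𝒜 M D (n + m) f t ≤ surv 𝒜 M D n f t := by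
  induction m with
  | zero => exact le_rfl
  | succ m ih => exact le_trans (surv_succ_le 𝒜 M D hM (n + m) f t) ih

lemma surv_kill (κ : List S) (f : Set (Q × S)) (t : S)
    (hkill : fibRun 𝒜 D f κ = ∅) :
    surv 𝒜 M D κ.length f t ≤ 1 - Mw M t κ := by
  induction κ generalizing f t with
  | nil =>
    have : f = ∅ := hkill
    rw [this, surv_empty 𝒜 M D hM]
    norm_num
  | cons t' κ' ih =>
    have hterm : ∀ t'' ∈ Finset.univ, M t t'' * surv 𝒜 M D κ'.length (fibStep 𝒜 D f t'') t''
        ≤ M t t'' * (1 - (if t'' = t' then Mw M t' κ' else 0)) := by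
      intro t'' _
      refine mul_le_mul_of_nonneg_left ?_ (hM.1 t t'')
      split
      · next h =>
        subst h
        exact ih (fibStep 𝒜 D f t'') t'' hkill
      · simpa using surv_le_one 𝒜 M D hM κ'.length (fibStep 𝒜 D f t'') t''
    calc surv 𝒜 M D (t' :: κ').length f t
        = ∑ t'', M t t'' * surv 𝒜 M D κ'.length (fibStep 𝒜 D f t'') t'' := rfl
      _ ≤ ∑ t'', M t t'' * (1 - (if t'' = t' then Mw M t' κ' else 0)) :=
          Finset.sum_le_sum hterm
      _ = 1 - Mw M t (t' :: κ') := by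
          simp only [mul_sub, mul_one, Finset.sum_sub_distrib, hM.2 t, mul_ite, mul_zero]
          rw [Finset.sum_ite_eq' Finset.univ t' (fun t'' => M t t'' * Mw M t' κ')]
          simp [Mw_cons]

lemma ret_eq_sum (n : ℕ) (f : Set (Q × S)) (t : S) :
    ret 𝒜 M D d n f t = ∑ x ∈ Wn S n, Mw M t x * ind (d ∈ fibRun 𝒜 D f x) := by
  induction n generalizing f t with
  | zero => simp [ret, Wn, fibRun]
  | succ n ih =>
    rw [sum_Wn_succ]
    calc ret 𝒜 M D d (n+1) f t
        = ∑ t', M t t' * ret 𝒜 M D d n (fibStep 𝒜 D f t') t' := rfl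
      _ = ∑ t', M t t' * ∑ x ∈ Wn S n, Mw M t' x * ind (d ∈ fibRun 𝒜 D (fibStep 𝒜 D f t') x) := by
          refine Finset.sum_congr rfl fun t' _ => ?_
          rw [ih]
      _ = ∑ t', ∑ x ∈ Wn S n, Mw M t (t' :: x) * ind (d ∈ fibRun 𝒜 D f (t' :: x)) := by
          refine Finset.sum_congr rfl fun t' _ => ?_
          rw [Finset.mul_sum]
          refine Finset.sum_congr rfl fun x _ => ?_
          have hfib : fibRun 𝒜 D f (t' :: x) = fibRun 𝒜 D (fibStep 𝒜 D f t') x := rfl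
          rw [Mw_cons, mul_assoc, hfib]

lemma ret_nonneg (n : ℕ) (f : Set (Q × S)) (t : S) : 0 ≤ ret 𝒜 M D d n f t := by
  induction n generalizing f t with
  | zero => exact ind_nonneg _
  | succ n ih =>
    exact Finset.sum_nonneg fun t' _ => mul_nonneg (hM.1 t t') (ih _ t')

end Surv

end Stmt6
namespace Stmt6

variable {Q S : Type} [Fintype Q] [Fintype S]

section PathM

variable (𝒜 : BA Q S) (D : Set (Q × S))

/-- 0/1 transition matrix of one fibre step within `D`. -/
noncomputable def Dmat (t : S) : Matrix (Q × S) (Q × S) ℝ :=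
  Matrix.of fun p p' =>
    if p ∈ D ∧ p' ∈ D ∧ p'.2 = t ∧ p'.1 ∈ 𝒜.delta p.1 p.2 then 1 else 0

/-- Path-counting matrix of a word. -/
noncomputable def PathM : List S → Matrix (Q × S) (Q × S) ℝ
  | [] => 1
  | t :: x => Dmat 𝒜 D t * PathM x

@[simp] lemma PathM_nil : PathM 𝒜 D [] = 1 := rfl

@[simp] lemma PathM_cons (t : S) (x : List S) :
    PathM 𝒜 D (t :: x) = Dmat 𝒜 D t * PathM 𝒜 D x := rfl

lemma Dmat_nonneg (t : S) (p p' : Q × S) : 0 ≤ Dmat 𝒜 D t p p' := by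
  unfold Dmat
  simp only [Matrix.of_apply]
  split <;> norm_num

lemma Dmat_le_one (t : S) (p p' : Q × S) : Dmat 𝒜 D t p p' ≤ 1 := by
  unfold Dmat
  simp only [Matrix.of_apply]
  split <;> norm_num

lemma PathM_nonneg (x : List S) (p p' : Q × S) : 0 ≤ PathM 𝒜 D x p p' := by
  induction x generalizing p p' with
  | nil =>
    show (0:ℝ) ≤ (1 : Matrix (Q × S) (Q × S) ℝ) p p'
    rw [Matrix.one_apply]
    split <;> norm_num
  | cons t x ih =>
    show (0:ℝ) ≤ (Dmat 𝒜 D t * PathM 𝒜 D x) p p'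
    rw [Matrix.mul_apply]
    exact Finset.sum_nonneg fun z _ => mul_nonneg (Dmat_nonneg 𝒜 D t p z) (ih z p')

lemma PathM_pos_mem {x : List S} {e e' : Q × S} (h : 0 < PathM 𝒜 D x e e') :
    e' ∈ fibRun 𝒜 D {e} x := by
  induction x generalizing e with
  | nil =>
    have : (1 : Matrix (Q × S) (Q × S) ℝ) e e' ≠ 0 := ne_of_gt h
    rw [Matrix.one_apply] at this
    by_cases he : e = e'
    · exact he ▸ rfl
    · simp [he] at this
  | cons t x ih =>
    have h' : (Dmat 𝒜 D t * PathM 𝒜 D x) e e' > 0 := h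
    rw [Matrix.mul_apply] at h'
    have : ∃ z, 0 < Dmat 𝒜 D t e z * PathM 𝒜 D x z e' := by
      by_contra hno
      push_neg at hno
      have : ∑ z, Dmat 𝒜 D t e z * PathM 𝒜 D x z e' = 0 :=
        le_antisymm (Finset.sum_nonpos fun z _ => hno z)
          (Finset.sum_nonneg fun z _ =>
            mul_nonneg (Dmat_nonneg 𝒜 D t e z) (PathM_nonneg 𝒜 D x z e'))
      rw [this] at h'
      exact lt_irrefl 0 h'
    obtain ⟨z, hz⟩ := this
    have hd : 0 < Dmat 𝒜 D t e z := by
      rcases lt_or_ge 0 (Dmat 𝒜 D t e z) with h1 | h1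
      · exact h1
      · nlinarith [PathM_nonneg 𝒜 D x z e', Dmat_nonneg 𝒜 D t e z]
    have hp : 0 < PathM 𝒜 D x z e' := by
      nlinarith [PathM_nonneg 𝒜 D x z e', Dmat_nonneg 𝒜 D t e z]
    have hcond : e ∈ D ∧ z ∈ D ∧ z.2 = t ∧ z.1 ∈ 𝒜.delta e.1 e.2 := by
      by_contra hc
      unfold Dmat at hd
      simp only [Matrix.of_apply] at hd
      rw [if_neg hc] at hd
      exact lt_irrefl 0 hd
    have hzstep : z ∈ fibStep 𝒜 D {e} t :=
      ⟨hcond.2.1, hcond.2.2.1, e, rfl, hcond.2.2.2⟩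
    exact fibRun_mono 𝒜 D (by intro y hy; rcases hy with rfl; exact hzstep) x (ih hp)

/-- Explicit paths within `D` along a word. -/
def PRun : (Q × S) → List S → (Q × S) → List (Q × S) → Prop
  | e, [], e', l => e = e' ∧ l = []
  | e, t :: x, e', l => ∃ p l', l = p :: l' ∧ e ∈ D ∧ p ∈ D ∧ p.2 = t ∧
      p.1 ∈ 𝒜.delta e.1 e.2 ∧ PRun p x e' l'

lemma PRun_snd {x : List S} {e e' : Q × S} {l : List (Q × S)}
    (h : PRun 𝒜 D e x e' l) : l.map Prod.snd = x := by
  induction x generalizing e l with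
  | nil => rw [h.2]; rfl
  | cons t x ih =>
    obtain ⟨p, l', rfl, _, _, hpt, _, hrec⟩ := h
    simp [ih hrec, hpt]

lemma PRun_isRun {x : List S} {e e' : Q × S} {l : List (Q × S)}
    (h : PRun 𝒜 D e x e' l) :
    𝒜.IsRun e.1 ((e.2 :: x).dropLast) (e.1 :: l.map Prod.fst) e'.1 := by
  induction x generalizing e l with
  | nil =>
    obtain ⟨rfl, rfl⟩ := h
    exact ⟨rfl, rfl⟩
  | cons t x ih =>
    obtain ⟨p, l', rfl, _, _, hpt, hdel, hrec⟩ := h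
    have hw : ((e.2 :: t :: x).dropLast) = e.2 :: ((t :: x).dropLast) := by
      simp [List.dropLast_cons₂]
    rw [hw]
    refine ⟨p.1, p.1 :: l'.map Prod.fst, rfl, hdel, ?_⟩
    have := ih hrec
    rwa [hpt] at this

lemma PathM_pos_PRun {x : List S} {e e' : Q × S} (h : 0 < PathM 𝒜 D x e e') :
    ∃ l, PRun 𝒜 D e x e' l := by
  induction x generalizing e with
  | nil =>
    have : (1 : Matrix (Q × S) (Q × S) ℝ) e e' ≠ 0 := ne_of_gt h
    rw [Matrix.one_apply] at this
    by_cases he : e = e'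
    · exact ⟨[], he, rfl⟩
    · simp [he] at this
  | cons t x ih =>
    have h' : (Dmat 𝒜 D t * PathM 𝒜 D x) e e' > 0 := h
    rw [Matrix.mul_apply] at h'
    have : ∃ z, 0 < Dmat 𝒜 D t e z * PathM 𝒜 D x z e' := by
      by_contra hno
      push_neg at hno
      have : ∑ z, Dmat 𝒜 D t e z * PathM 𝒜 D x z e' = 0 :=
        le_antisymm (Finset.sum_nonpos fun z _ => hno z)
          (Finset.sum_nonneg fun z _ =>
            mul_nonneg (Dmat_nonneg 𝒜 D t e z) (PathM_nonneg 𝒜 D x z e'))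
      rw [this] at h'
      exact lt_irrefl 0 h'
    obtain ⟨z, hz⟩ := this
    have hd : 0 < Dmat 𝒜 D t e z := by
      nlinarith [PathM_nonneg 𝒜 D x z e', Dmat_nonneg 𝒜 D t e z]
    have hp : 0 < PathM 𝒜 D x z e' := by
      nlinarith [PathM_nonneg 𝒜 D x z e', Dmat_nonneg 𝒜 D t e z]
    have hcond : e ∈ D ∧ z ∈ D ∧ z.2 = t ∧ z.1 ∈ 𝒜.delta e.1 e.2 := by
      by_contra hc
      unfold Dmat at hd
      simp only [Matrix.of_apply] at hd
      rw [if_neg hc] at hd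
      exact lt_irrefl 0 hd
    obtain ⟨l, hl⟩ := ih hp
    exact ⟨z :: l, z, l, rfl, hcond.1, hcond.2.1, hcond.2.2.1, hcond.2.2.2, hl⟩

lemma list_eq_of_components {l₁ l₂ : List (Q × S)}
    (h1 : l₁.map Prod.fst = l₂.map Prod.fst) (h2 : l₁.map Prod.snd = l₂.map Prod.snd) :
    l₁ = l₂ := by
  induction l₁ generalizing l₂ with
  | nil => cases l₂ with
    | nil => rfl
    | cons b l₂ => simp at h1
  | cons a l₁ ih =>
    cases l₂ with
    | nil => simp at h1
    | cons b l₂ =>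
      simp only [List.map_cons, List.cons.injEq] at h1 h2
      rw [ih h1.2 h2.2, Prod.ext h1.1 h2.1]

lemma PRun_unique (hND : ¬ 𝒜.HasDiamond) {x : List S} {e e' : Q × S}
    {l₁ l₂ : List (Q × S)} (h1 : PRun 𝒜 D e x e' l₁) (h2 : PRun 𝒜 D e x e' l₂) :
    l₁ = l₂ := by
  by_contra hne
  have hr1 := PRun_isRun 𝒜 D h1
  have hr2 := PRun_isRun 𝒜 D h2
  have hfst : l₁.map Prod.fst ≠ l₂.map Prod.fst := by
    intro hf
    exact hne (list_eq_of_components hf ((PRun_snd 𝒜 D h1).trans (PRun_snd 𝒜 D h2).symm))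
  exact hND ⟨e.1, e'.1, _, _, _, by simpa using hfst, hr1, hr2⟩

lemma PathM_le_one (hND : ¬ 𝒜.HasDiamond) (x : List S) (e e' : Q × S) :
    PathM 𝒜 D x e e' ≤ 1 := by
  induction x generalizing e with
  | nil =>
    show (1 : Matrix (Q × S) (Q × S) ℝ) e e' ≤ 1
    rw [Matrix.one_apply]
    split <;> norm_num
  | cons t x ih =>
    show (Dmat 𝒜 D t * PathM 𝒜 D x) e e' ≤ 1
    rw [Matrix.mul_apply]
    by_cases hpos : ∃ z, 0 < Dmat 𝒜 D t e z * PathM 𝒜 D x z e'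
    · obtain ⟨z₀, hz₀⟩ := hpos
      have huniq : ∀ z, z ≠ z₀ → Dmat 𝒜 D t e z * PathM 𝒜 D x z e' = 0 := by
        intro z hzz
        rcases eq_or_lt_of_le (mul_nonneg (Dmat_nonneg 𝒜 D t e z)
          (PathM_nonneg 𝒜 D x z e')) with h0 | hzpos
        · exact h0.symm
        · exfalso
          -- two positive summands give two distinct PRuns
          have mk : ∀ y : Q × S, 0 < Dmat 𝒜 D t e y * PathM 𝒜 D x y e' →
              ∃ l, PRun 𝒜 D e (t :: x) e' (y :: l) := by
            intro y hy
            have hdy : 0 < Dmat 𝒜 D t e y := by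
              nlinarith [PathM_nonneg 𝒜 D x y e', Dmat_nonneg 𝒜 D t e y]
            have hpy : 0 < PathM 𝒜 D x y e' := by
              nlinarith [PathM_nonneg 𝒜 D x y e', Dmat_nonneg 𝒜 D t e y]
            have hcond : e ∈ D ∧ y ∈ D ∧ y.2 = t ∧ y.1 ∈ 𝒜.delta e.1 e.2 := by
              by_contra hc
              unfold Dmat at hdy
              simp only [Matrix.of_apply] at hdy
              rw [if_neg hc] at hdy
              exact lt_irrefl 0 hdy
            obtain ⟨l, hl⟩ := PathM_pos_PRun 𝒜 D hpy
            exact ⟨l, y, l, rfl, hcond.1, hcond.2.1, hcond.2.2.1, hcond.2.2.2, hl⟩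
          obtain ⟨l, hl⟩ := mk z hzpos
          obtain ⟨l₀, hl₀⟩ := mk z₀ hz₀
          have := PRun_unique 𝒜 D hND hl hl₀
          exact hzz (by injection this)
      rw [Finset.sum_eq_single z₀ (fun z _ hz => huniq z hz)
        (fun h => absurd (Finset.mem_univ z₀) h)]
      calc Dmat 𝒜 D t e z₀ * PathM 𝒜 D x z₀ e' ≤ 1 * 1 :=
        mul_le_mul (Dmat_le_one 𝒜 D t e z₀) (ih z₀) (PathM_nonneg 𝒜 D x z₀ e') zero_le_one
      _ = 1 := by ring
    · push_neg at hpos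
      have : ∑ z, Dmat 𝒜 D t e z * PathM 𝒜 D x z e' = 0 :=
        le_antisymm (Finset.sum_nonpos fun z _ => hpos z)
          (Finset.sum_nonneg fun z _ =>
            mul_nonneg (Dmat_nonneg 𝒜 D t e z) (PathM_nonneg 𝒜 D x z e'))
      rw [this]
      norm_num

end PathM

end Stmt6
namespace Stmt6

variable {Q S : Type} [Fintype Q] [Fintype S]

section SubB

variable (𝒜 : BA Q S) (M : Matrix S S ℝ) (D : Set (Q × S))

/-- The matrix `B` restricted to `D`, as a full-size matrix. -/
noncomputable def Bfull : Matrix (Q × S) (Q × S) ℝ :=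
  Matrix.of fun p p' =>
    if p ∈ D ∧ p' ∈ D ∧ p'.1 ∈ 𝒜.delta p.1 p.2 then M p.2 p'.2 else 0

lemma sum_over_D {f : Q × S → ℝ} (h0 : ∀ z ∉ D, f z = 0) :
    ∑ z, f z = ∑ r : ↥D, f ↑r := by
  have h2 : ∑ z ∈ D.toFinset, f z = ∑ z, f z :=
    Finset.sum_subset (Finset.subset_univ _)
      (fun z _ hz => h0 z (fun hzD => hz (Set.mem_toFinset.2 hzD)))
  rw [← h2]
  exact Finset.sum_subtype _ (fun x => Set.mem_toFinset) f

lemma Bfull_zero_left {z : Q × S} (hz : z ∉ D) (z' : Q × S) : Bfull 𝒜 M D z z' = 0 := by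
  unfold Bfull
  simp only [Matrix.of_apply]
  rw [if_neg (fun hc => hz hc.1)]

lemma subB_eq_Bfull (p p' : ↥D) :
    subMat (Bmat 𝒜 M) D p p' = Bfull 𝒜 M D ↑p ↑p' := by
  obtain ⟨p, hp⟩ := p
  obtain ⟨p', hp'⟩ := p'
  show Bmat 𝒜 M p p' = Bfull 𝒜 M D p p'
  unfold Bmat Bfull
  simp only [Matrix.of_apply]
  by_cases hdel : p'.1 ∈ 𝒜.delta p.1 p.2
  · rw [if_pos hdel, if_pos ⟨hp, hp', hdel⟩]
  · rw [if_neg hdel, if_neg (fun hc => hdel hc.2.2)]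

lemma subB_pow_eq_Bfull_pow (n : ℕ) (p p' : ↥D) :
    (subMat (Bmat 𝒜 M) D ^ n) p p' = (Bfull 𝒜 M D ^ n) ↑p ↑p' := by
  induction n generalizing p' with
  | zero =>
    simp only [pow_zero, Matrix.one_apply]
    by_cases h : p = p'
    · rw [if_pos h, if_pos (congrArg Subtype.val h)]
    · rw [if_neg h, if_neg (fun hc => h (Subtype.ext hc))]
  | succ n ih =>
    rw [pow_succ, pow_succ, Matrix.mul_apply, Matrix.mul_apply]
    rw [show ∑ z, (Bfull 𝒜 M D ^ n) ↑p z * Bfull 𝒜 M D z ↑p'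
        = ∑ r : ↥D, (Bfull 𝒜 M D ^ n) ↑p ↑r * Bfull 𝒜 M D ↑r ↑p' from
      sum_over_D D (fun z hz => by rw [Bfull_zero_left 𝒜 M D hz, mul_zero])]
    refine Finset.sum_congr rfl fun r _ => ?_
    rw [ih r, subB_eq_Bfull]

set_option maxHeartbeats 1000000 in
lemma Bfull_pow_word (n : ℕ) (z z' : Q × S) :
    (Bfull 𝒜 M D ^ n) z z' = ∑ x ∈ Wn S n, Mw M z.2 x * PathM 𝒜 D x z z' := by
  induction n generalizing z with
  | zero => simp [Wn, PathM]
  | succ n ih =>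
    have key : ∀ x : List S, ∀ y : Q × S,
        ∑ t, (M z.2 t * Mw M t x) * (Dmat 𝒜 D t z y * PathM 𝒜 D x y z')
          = Bfull 𝒜 M D z y * (Mw M y.2 x * PathM 𝒜 D x y z') := by
      intro x y
      rw [Finset.sum_eq_single y.2]
      · have hDB : M z.2 y.2 * Dmat 𝒜 D y.2 z y = Bfull 𝒜 M D z y := by
          unfold Dmat Bfull
          simp only [Matrix.of_apply]
          split_ifs with h1 h2 <;> simp_all
        calc (M z.2 y.2 * Mw M y.2 x) * (Dmat 𝒜 D y.2 z y * PathM 𝒜 D x y z')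
            = (M z.2 y.2 * Dmat 𝒜 D y.2 z y) * (Mw M y.2 x * PathM 𝒜 D x y z') := by ring
          _ = _ := by rw [hDB]
      · intro t _ ht
        have : Dmat 𝒜 D t z y = 0 := by
          unfold Dmat
          simp only [Matrix.of_apply]
          rw [if_neg (fun hc => ht (hc.2.2.1.symm))]
        rw [this, zero_mul, mul_zero]
      · intro h
        exact absurd (Finset.mem_univ y.2) h
    calc (Bfull 𝒜 M D ^ (n+1)) z z'
        = ∑ y, Bfull 𝒜 M D z y * (Bfull 𝒜 M D ^ n) y z' := by
          rw [pow_succ']; rw [Matrix.mul_apply]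
      _ = ∑ y, ∑ x ∈ Wn S n, Bfull 𝒜 M D z y * (Mw M y.2 x * PathM 𝒜 D x y z') := by
          refine Finset.sum_congr rfl fun y _ => ?_
          rw [ih y, Finset.mul_sum]
      _ = ∑ x ∈ Wn S n, ∑ y, Bfull 𝒜 M D z y * (Mw M y.2 x * PathM 𝒜 D x y z') :=
          Finset.sum_comm
      _ = ∑ x ∈ Wn S n, ∑ y, ∑ t, (M z.2 t * Mw M t x) * (Dmat 𝒜 D t z y * PathM 𝒜 D x y z') := by
          refine Finset.sum_congr rfl fun x _ => Finset.sum_congr rfl fun y _ => ?_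
          rw [key x y]
      _ = ∑ x ∈ Wn S n, ∑ t, ∑ y, (M z.2 t * Mw M t x) * (Dmat 𝒜 D t z y * PathM 𝒜 D x y z') := by
          exact Finset.sum_congr rfl fun x _ => Finset.sum_comm
      _ = ∑ t, ∑ x ∈ Wn S n, ∑ y, (M z.2 t * Mw M t x) * (Dmat 𝒜 D t z y * PathM 𝒜 D x y z') :=
          Finset.sum_comm
      _ = ∑ t, ∑ x ∈ Wn S n, Mw M z.2 (t :: x) * PathM 𝒜 D (t :: x) z z' := by
          refine Finset.sum_congr rfl fun t _ => Finset.sum_congr rfl fun x _ => ?_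
          simp only [Mw_cons, PathM_cons, Matrix.mul_apply, Finset.mul_sum]
      _ = ∑ x ∈ Wn S (n+1), Mw M z.2 x * PathM 𝒜 D x z z' :=
          (sum_Wn_succ n (fun x => Mw M z.2 x * PathM 𝒜 D x z z')).symm

end SubB

end Stmt6
namespace Stmt6

variable {Q S : Type} [Fintype Q] [Fintype S]

section Spectral

variable (𝒜 : BA Q S) (M : Matrix S S ℝ) (D : Set (Q × S))

lemma subB_nonneg (hM : IsMarkov M) (p p' : ↥D) :
    0 ≤ subMat (Bmat 𝒜 M) D p p' := by
  show (0:ℝ) ≤ Bmat 𝒜 M ↑p ↑p'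
  unfold Bmat
  simp only [Matrix.of_apply]
  split
  · exact hM.1 _ _
  · exact le_rfl

lemma subB_pow_nonneg (hM : IsMarkov M) (n : ℕ) (p p' : ↥D) :
    0 ≤ (subMat (Bmat 𝒜 M) D ^ n) p p' := by
  induction n generalizing p' with
  | zero =>
    rw [pow_zero, Matrix.one_apply]
    split <;> norm_num
  | succ n ih =>
    rw [pow_succ, Matrix.mul_apply]
    exact Finset.sum_nonneg fun r _ =>
      mul_nonneg (ih r) (subB_nonneg 𝒜 M D hM r p')

lemma subB_pow_add_ge (hM : IsMarkov M) (m n : ℕ) (a b c : ↥D) :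
    (subMat (Bmat 𝒜 M) D ^ m) a b * (subMat (Bmat 𝒜 M) D ^ n) b c
      ≤ (subMat (Bmat 𝒜 M) D ^ (m + n)) a c := by
  rw [pow_add, Matrix.mul_apply]
  exact Finset.single_le_sum
    (f := fun b' => (subMat (Bmat 𝒜 M) D ^ m) a b' * (subMat (Bmat 𝒜 M) D ^ n) b' c)
    (fun b' _ => mul_nonneg (subB_pow_nonneg 𝒜 M D hM m a b')
      (subB_pow_nonneg 𝒜 M D hM n b' c))
    (Finset.mem_univ b)

lemma map_ofReal_mul {n : Type} [Fintype n] [DecidableEq n] (X Y : Matrix n n ℝ) :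
    (X * Y).map Complex.ofReal = X.map Complex.ofReal * Y.map Complex.ofReal :=
  Matrix.map_mul (f := Complex.ofRealHom)

lemma spectral_lower (hM : IsMarkov M) (hDne : Nonempty ↥D)
    (hrec : RecurrentSCC 𝒜 M D) (n : ℕ) :
    (1:ℝ)/2 ≤ ∑ p : ↥D, ∑ p' : ↥D, (subMat (Bmat 𝒜 M) D ^ n) p p' := by
  rcases Nat.eq_zero_or_pos n with rfl | hn
  · have hcalc : ∑ p : ↥D, ∑ p' : ↥D, (subMat (Bmat 𝒜 M) D ^ 0) p p'
        = (Fintype.card ↥D : ℝ) := by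
      simp only [pow_zero, Matrix.one_apply]
      rw [Finset.sum_congr rfl (fun p _ => Finset.sum_ite_eq Finset.univ p (fun _ => (1:ℝ)))]
      simp [Finset.card_univ]
    rw [hcalc]
    have : (1:ℕ) ≤ Fintype.card ↥D := Fintype.card_pos
    have : (1:ℝ) ≤ (Fintype.card ↥D : ℝ) := by exact_mod_cast this
    linarith
  · set A := subMat (Bmat 𝒜 M) D with hA
    have hsup : sSup {x : ℝ | ∃ c ∈ spectrum ℂ (A.map Complex.ofReal), x = ‖c‖} = 1 :=
      hrec
    set SpecSet := {x : ℝ | ∃ c ∈ spectrum ℂ (A.map Complex.ofReal), x = ‖c‖}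
      with hSpecSet
    have hne : SpecSet.Nonempty := by
      by_contra h
      rw [Set.not_nonempty_iff_eq_empty] at h
      rw [h, Real.sSup_empty] at hsup
      norm_num at hsup
    have hδpos : 0 < 1/(2*(n:ℝ)) := by positivity
    have hlt : 1 - 1/(2*(n:ℝ)) < sSup SpecSet := by rw [hsup]; linarith
    obtain ⟨x, hxmem, hx⟩ := exists_lt_of_lt_csSup hne hlt
    obtain ⟨lam, hlammem, rfl⟩ := hxmem
    -- eigenvector for lam
    have hnotunit : ¬ IsUnit (algebraMap ℂ (Matrix ↥D ↥D ℂ) lam - A.map Complex.ofReal) :=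
      spectrum.mem_iff.1 hlammem
    have hdet : (algebraMap ℂ (Matrix ↥D ↥D ℂ) lam - A.map Complex.ofReal).det = 0 := by
      by_contra h
      exact hnotunit ((Matrix.isUnit_iff_isUnit_det _).2 (isUnit_iff_ne_zero.2 h))
    obtain ⟨v, hv0, hveq⟩ := (Matrix.exists_mulVec_eq_zero_iff).2 hdet
    have hAv : (A.map Complex.ofReal).mulVec v = lam • v := by
      have h1 : (algebraMap ℂ (Matrix ↥D ↥D ℂ) lam - A.map Complex.ofReal).mulVec v = 0 := hveq
      rw [Matrix.sub_mulVec] at h1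
      have h2 : (algebraMap ℂ (Matrix ↥D ↥D ℂ) lam).mulVec v = lam • v := by
        rw [Algebra.algebraMap_eq_smul_one, Matrix.smul_mulVec, Matrix.one_mulVec]
      rw [h2] at h1
      have := sub_eq_zero.1 h1
      exact this.symm
    have hpow : ∀ m : ℕ, ((A ^ m).map Complex.ofReal).mulVec v = (lam ^ m) • v := by
      intro m
      induction m with
      | zero =>
        rw [pow_zero, pow_zero]
        rw [Matrix.map_one Complex.ofReal Complex.ofReal_zero Complex.ofReal_one]
        rw [Matrix.one_mulVec, one_smul]
      | succ m ih =>
        rw [pow_succ', map_ofReal_mul, ← Matrix.mulVec_mulVec, ih]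
        rw [Matrix.mulVec_smul, hAv, smul_smul, ← pow_succ]
    -- pick maximal coordinate
    obtain ⟨i, _, himax⟩ := Finset.exists_max_image Finset.univ
      (fun j : ↥D => ‖v j‖) (Finset.univ_nonempty)
    have hvi : 0 < ‖v i‖ := by
      have hj : ∃ j, v j ≠ 0 := by
        by_contra h
        push_neg at h
        exact hv0 (funext h)
      obtain ⟨j, hj⟩ := hj
      have h1 : 0 < ‖v j‖ := norm_pos_iff.2 hj
      have h2 := himax j (Finset.mem_univ j)
      linarith
    have key : ‖lam ^ n‖ * ‖v i‖
        ≤ (∑ j, (A ^ n) i j) * ‖v i‖ := by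
      calc ‖lam ^ n‖ * ‖v i‖
          = ‖(lam ^ n) * v i‖ := (norm_mul _ _).symm
        _ = ‖((A ^ n).map Complex.ofReal).mulVec v i‖ := by
            rw [hpow n]; rfl
        _ = ‖∑ j, ((A ^ n).map Complex.ofReal) i j * v j‖ := by
            rfl
        _ ≤ ∑ j, ‖((A ^ n).map Complex.ofReal) i j * v j‖ :=
            norm_sum_le _ _
        _ = ∑ j, (A ^ n) i j * ‖v j‖ := by
            refine Finset.sum_congr rfl fun j _ => ?_
            have hmm : ‖((A ^ n).map Complex.ofReal) i j * v j‖
                = ‖((A ^ n).map Complex.ofReal) i j‖ * ‖v j‖ :=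
              norm_mul _ _
            rw [hmm, Matrix.map_apply, Complex.norm_real, Real.norm_eq_abs,
              abs_of_nonneg (subB_pow_nonneg 𝒜 M D hM n i j)]
        _ ≤ ∑ j, (A ^ n) i j * ‖v i‖ :=
            Finset.sum_le_sum fun j _ => mul_le_mul_of_nonneg_left
              (himax j (Finset.mem_univ j)) (subB_pow_nonneg 𝒜 M D hM n i j)
        _ = (∑ j, (A ^ n) i j) * ‖v i‖ := (Finset.sum_mul _ _ _).symm
    have h1 : ‖lam ^ n‖ ≤ ∑ j, (A ^ n) i j :=
      le_of_mul_le_mul_right key hvi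
    have h2 : ∑ j, (A ^ n) i j ≤ ∑ p : ↥D, ∑ p' : ↥D, (A ^ n) p p' :=
      Finset.single_le_sum (f := fun p => ∑ j, (A ^ n) p j)
        (fun p _ => Finset.sum_nonneg fun j _ => subB_pow_nonneg 𝒜 M D hM n p j)
        (Finset.mem_univ i)
    have h3 : (1:ℝ)/2 ≤ ‖lam ^ n‖ := by
      rw [norm_pow]
      have hnR : (1:ℝ) ≤ (n:ℝ) := by exact_mod_cast hn
      have hδle : 1/(2*(n:ℝ)) ≤ 1/2 := by
        rw [div_le_div_iff₀ (by linarith) (by norm_num)]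
        linarith
      have hbase : (0:ℝ) ≤ 1 - 1/(2*(n:ℝ)) := by linarith
      have hbern : 1 + (n:ℝ) * (-(1/(2*(n:ℝ)))) ≤ (1 + (-(1/(2*(n:ℝ)))))^n :=
        one_add_mul_le_pow (by linarith) n
      have hval : 1 + (n:ℝ) * (-(1/(2*(n:ℝ)))) = 1/2 := by
        have hn0 : (n:ℝ) ≠ 0 := by linarith
        field_simp
        ring
      calc (1:ℝ)/2 = 1 + (n:ℝ) * (-(1/(2*(n:ℝ)))) := hval.symm
        _ ≤ (1 + (-(1/(2*(n:ℝ)))))^n := hbern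
        _ = (1 - 1/(2*(n:ℝ)))^n := by ring_nf
        _ ≤ (‖lam‖)^n := by
            refine pow_le_pow_left₀ hbase ?_ n
            linarith
    linarith

end Spectral

end Stmt6
namespace Stmt6

variable {Q S : Type} [Fintype Q] [Fintype S]

section Pairs

variable (𝒜 : BA Q S) (M : Matrix S S ℝ) (D : Set (Q × S))

/-- Vertices of the synchronised pair graph. -/
def PairV : Type := {x : (Q × S) × (Q × S) // x.1 ∈ D ∧ x.2 ∈ D ∧ x.1.2 = x.2.2}

noncomputable instance : Fintype (PairV D) := by
  unfold PairV
  infer_instance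

/-- Edges of the synchronised pair graph. -/
def rV : PairV D → PairV D → Prop := fun a b =>
  0 < M a.val.1.2 b.val.1.2 ∧ b.val.1.1 ∈ 𝒜.delta a.val.1.1 a.val.1.2 ∧
    b.val.2.1 ∈ 𝒜.delta a.val.2.1 a.val.2.2

lemma card_PairV_le : Fintype.card (PairV D) ≤ Fintype.card Q * D.ncard := by
  have hinj : Function.Injective (fun x : PairV D => (x.val.1.1, (⟨x.val.2, x.prop.2.1⟩ : ↥D))) := by
    rintro ⟨⟨a, b⟩, ha, hb, hab⟩ ⟨⟨a', b'⟩, ha', hb', hab'⟩ h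
    simp only [Prod.mk.injEq, Subtype.mk.injEq] at h
    obtain ⟨h1, h2⟩ := h
    have : a = a' := by
      apply Prod.ext h1
      show a.2 = a'.2
      rw [hab, hab', h2]
    subst this h2; rfl
  have hcard := Fintype.card_le_of_injective _ hinj
  have : Fintype.card (Q × ↥D) = Fintype.card Q * D.ncard := by
    rw [Fintype.card_prod]
    congr 1
    rw [← Nat.card_eq_fintype_card, Nat.card_coe_set_eq]
  rwa [this] at hcard

lemma pair_rtg {a b : Q × S} (ha : a ∈ D) (hb : b ∈ D) (hab : a.2 = b.2)
    (y : List S) (hen : Enabled M (a.2 :: y)) {a' b' : Q × S}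
    (ha' : a' ∈ fibRun 𝒜 D {a} y) (hb' : b' ∈ fibRun 𝒜 D {b} y) :
    ∃ h' : a' ∈ D ∧ b' ∈ D ∧ a'.2 = b'.2,
      Relation.ReflTransGen (rV 𝒜 M D) ⟨(a, b), ha, hb, hab⟩ ⟨(a', b'), h'⟩ := by
  induction y generalizing a b with
  | nil =>
    rcases ha' with rfl
    rcases hb' with rfl
    exact ⟨⟨ha, hb, hab⟩, Relation.ReflTransGen.refl⟩
  | cons t y ih =>
    obtain ⟨a₁, ha₁step, ha₁run⟩ := mem_fibRun_source 𝒜 D _ y ha'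
    obtain ⟨b₁, hb₁step, hb₁run⟩ := mem_fibRun_source 𝒜 D _ y hb'
    obtain ⟨ha₁D, ha₁t, ea, hea, ha₁del⟩ := ha₁step
    obtain ⟨hb₁D, hb₁t, eb, heb, hb₁del⟩ := hb₁step
    rw [Set.mem_singleton_iff] at hea heb
    rw [hea] at ha₁del
    rw [heb] at hb₁del
    have h₁ab : a₁.2 = b₁.2 := by rw [ha₁t, hb₁t]
    have henM : 0 < M a.2 t := (List.isChain_cons_cons.1 hen).1
    have hen' : Enabled M (a₁.2 :: y) := by
      rw [ha₁t]
      exact (List.isChain_cons_cons.1 hen).2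
    obtain ⟨h', hrtg⟩ := ih ha₁D hb₁D h₁ab hen' ha₁run hb₁run
    refine ⟨h', Relation.ReflTransGen.head ⟨?_, ha₁del, hb₁del⟩ hrtg⟩
    show 0 < M a.2 a₁.2
    rw [ha₁t]
    exact henM

lemma RN_to_word (a₀ : PairV D) :
    ∀ n (b : PairV D), b ∈ RN (rV 𝒜 M D) a₀ n →
      ∃ y : List S, y.length ≤ n ∧ Enabled M (a₀.val.1.2 :: y) ∧
        b.val.1 ∈ fibRun 𝒜 D {a₀.val.1} y ∧ b.val.2 ∈ fibRun 𝒜 D {a₀.val.2} y := by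
  refine RN_elim (rV 𝒜 M D) a₀ _ ?_ ?_ ?_
  · exact ⟨[], le_rfl, List.isChain_singleton _, rfl, rfl⟩
  · rintro n b ⟨y, hy, hen, h1, h2⟩
    exact ⟨y, Nat.le_succ_of_le hy, hen, h1, h2⟩
  · rintro n c b ⟨y, hy, hen, h1, h2⟩ hcb
    set t := b.val.1.2 with ht
    refine ⟨y ++ [t], by simpa using Nat.succ_le_succ hy, ?_, ?_, ?_⟩
    · -- enabledness
      refine enabled_getLastD M hen ?_
      have hlast : c.val.1.2 = y.getLastD a₀.val.1.2 := by
        cases hyn : y with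
        | nil =>
          rcases (by rw [hyn] at h1; exact h1 : c.val.1 ∈ ({a₀.val.1} : Set (Q × S))) with h
          rw [h]
          rfl
        | cons u y' =>
          rw [← hyn]
          exact mem_fibRun_getLastD 𝒜 D _ (by rw [hyn]; exact List.cons_ne_nil _ _) _
            (by rw [hyn] at h1 ⊢; exact h1)
      show Enabled M (y.getLastD a₀.val.1.2 :: [t])
      rw [← hlast]
      exact List.isChain_pair.2 hcb.1
    · rw [fibRun_append]
      show b.val.1 ∈ fibStep 𝒜 D (fibRun 𝒜 D {a₀.val.1} y) t
      exact ⟨b.prop.1, rfl, c.val.1, h1, hcb.2.1⟩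
    · rw [fibRun_append]
      show b.val.2 ∈ fibStep 𝒜 D (fibRun 𝒜 D {a₀.val.2} y) t
      exact ⟨b.prop.2.1, b.prop.2.2.symm, c.val.2, h2, hcb.2.2⟩

end Pairs

section Greedy

variable (𝒜 : BA Q S) (M : Matrix S S ℝ) (D : Set (Q × S)) (d : Q × S)

lemma fib_ncard_le (hd : d ∈ D) (w : List S) (hmem : d ∈ fibRun 𝒜 D {d} w) :
    (fibRun 𝒜 D {d} w).ncard ≤ Fintype.card Q := by
  have hsub : ∀ e ∈ fibRun 𝒜 D {d} w, e.2 = d.2 := by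
    intro e he
    cases hw : w with
    | nil =>
      rw [hw] at he
      rcases he with rfl
      rfl
    | cons u y =>
      rw [hw] at he hmem
      have h1 := mem_fibRun_getLastD 𝒜 D _ (List.cons_ne_nil u y) d.2 he
      have h2 := mem_fibRun_getLastD 𝒜 D _ (List.cons_ne_nil u y) d.2 hmem
      rw [h1, ← h2]
  have hinj : Set.InjOn Prod.fst (fibRun 𝒜 D {d} w) := by
    intro e he e' he' hfst
    exact Prod.ext hfst (by rw [hsub e he, hsub e' he'])
  calc (fibRun 𝒜 D {d} w).ncard ≤ (Set.univ : Set Q).ncard :=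
        Set.ncard_le_ncard_of_injOn Prod.fst (fun e _ => Set.mem_univ _) hinj (Set.toFinite _)
    _ = Fintype.card Q := by rw [Set.ncard_univ, Nat.card_eq_fintype_card]

lemma grow_superset {y w : List S} (hy : d ∈ fibRun 𝒜 D {d} y) :
    fibRun 𝒜 D {d} w ⊆ fibRun 𝒜 D {d} (y ++ w) := by
  rw [fibRun_append]
  exact fibRun_mono 𝒜 D (fun z hz => by rcases hz with rfl; exact hy) w

lemma exists_stable_word (hd : d ∈ D) :
    ∃ w : List S, Enabled M (d.2 :: w) ∧ d ∈ fibRun 𝒜 D {d} w ∧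
      w.length ≤ ((fibRun 𝒜 D {d} w).ncard - 1) * (Fintype.card Q * D.ncard) ∧
      ∀ y, Enabled M (d.2 :: y) → d ∈ fibRun 𝒜 D {d} y →
        fibRun 𝒜 D {d} (y ++ w) = fibRun 𝒜 D {d} w := by
  set K := Fintype.card Q * D.ncard with hK
  -- auxiliary recursion on the remaining room
  suffices haux : ∀ k (w : List S), Enabled M (d.2 :: w) → d ∈ fibRun 𝒜 D {d} w →
      w.length ≤ ((fibRun 𝒜 D {d} w).ncard - 1) * K →
      Fintype.card Q ≤ (fibRun 𝒜 D {d} w).ncard + k →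
      ∃ w' : List S, Enabled M (d.2 :: w') ∧ d ∈ fibRun 𝒜 D {d} w' ∧
        w'.length ≤ ((fibRun 𝒜 D {d} w').ncard - 1) * K ∧
        ∀ y, Enabled M (d.2 :: y) → d ∈ fibRun 𝒜 D {d} y →
          fibRun 𝒜 D {d} (y ++ w') = fibRun 𝒜 D {d} w' by
    have h0 : d ∈ fibRun 𝒜 D {d} [] := rfl
    obtain ⟨w', h1, h2, h3, h4⟩ := haux (Fintype.card Q) [] (List.isChain_singleton _) h0
      (by simp) (by omega)
    exact ⟨w', h1, h2, h3, h4⟩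
  intro k
  induction k with
  | zero =>
    intro w hen hmem hlen hroom
    refine ⟨w, hen, hmem, hlen, ?_⟩
    intro y hyen hymem
    -- any growth would exceed the cardinality bound
    have hsup := grow_superset 𝒜 D d (w := w) hymem
    by_contra hne
    have hssub : fibRun 𝒜 D {d} w ⊂ fibRun 𝒜 D {d} (y ++ w) :=
      Set.ssubset_iff_subset_ne.2 ⟨hsup, fun h => hne h.symm⟩
    have hlt := Set.ncard_lt_ncard hssub (Set.toFinite _)
    have hmem' : d ∈ fibRun 𝒜 D {d} (y ++ w) := hsup hmem
    have hle := fib_ncard_le 𝒜 D d hd (y ++ w) hmem'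
    omega
  | succ k ih =>
    intro w hen hmem hlen hroom
    by_cases hstab : ∀ y, Enabled M (d.2 :: y) → d ∈ fibRun 𝒜 D {d} y →
        fibRun 𝒜 D {d} (y ++ w) = fibRun 𝒜 D {d} w
    · exact ⟨w, hen, hmem, hlen, hstab⟩
    · push_neg at hstab
      obtain ⟨y, hyen, hymem, hyne⟩ := hstab
      have hsup := grow_superset 𝒜 D d (w := w) hymem
      have hssub : fibRun 𝒜 D {d} w ⊂ fibRun 𝒜 D {d} (y ++ w) :=
        Set.ssubset_iff_subset_ne.2 ⟨hsup, fun h => hyne h.symm⟩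
      obtain ⟨e'', he''big, he''notc⟩ := Set.exists_of_ssubset hssub
      -- find the source of e'' in the fibre of y
      rw [fibRun_append] at he''big
      obtain ⟨e', he'y, he''run⟩ := mem_fibRun_source 𝒜 D _ w he''big
      -- shorten y via the pair graph
      obtain ⟨h', hrtg⟩ := pair_rtg 𝒜 M D hd hd rfl y hyen hymem he'y
      have hRN := mem_RN_of_rtg (rV 𝒜 M D) _ hrtg
      obtain ⟨y', hy'len, hy'en, hy'd, hy'e'⟩ :=
        RN_to_word 𝒜 M D ⟨(d, d), hd, hd, rfl⟩ (Fintype.card (PairV D)) _ hRN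
      -- the new word
      set w₁ := y' ++ w with hw₁
      have hmem₁ : d ∈ fibRun 𝒜 D {d} w₁ := grow_superset 𝒜 D d hy'd hmem
      have hen₁ : Enabled M (d.2 :: w₁) := by
        refine enabled_getLastD M hy'en ?_
        have : y'.getLastD d.2 = d.2 := by
          cases hy'n : y' with
          | nil => rfl
          | cons u y'' =>
            rw [← hy'n]
            exact (mem_fibRun_getLastD 𝒜 D _ (by rw [hy'n]; exact List.cons_ne_nil _ _) d.2
              (by exact hy'd)).symm
        rw [this]
        exact hen
      have hgrow : fibRun 𝒜 D {d} w ⊂ fibRun 𝒜 D {d} w₁ := by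
        refine Set.ssubset_iff_subset_ne.2 ⟨grow_superset 𝒜 D d hy'd, fun h => ?_⟩
        have he''w₁ : e'' ∈ fibRun 𝒜 D {d} w₁ := by
          rw [hw₁, fibRun_append]
          exact fibRun_mono 𝒜 D (fun z hz => by rcases hz with rfl; exact hy'e') w he''run
        rw [← h] at he''w₁
        exact he''notc he''w₁
      have hcard : (fibRun 𝒜 D {d} w).ncard + 1 ≤ (fibRun 𝒜 D {d} w₁).ncard :=
        Set.ncard_lt_ncard hgrow (Set.toFinite _)
      have hK' : Fintype.card (PairV D) ≤ K := card_PairV_le D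
      have hone : 0 < (fibRun 𝒜 D {d} w).ncard :=
        (Set.ncard_pos (Set.toFinite _)).2 ⟨d, hmem⟩
      have hlen₁ : w₁.length ≤ ((fibRun 𝒜 D {d} w₁).ncard - 1) * K := by
        rw [hw₁, List.length_append]
        have h1 : y'.length + w.length ≤ K + ((fibRun 𝒜 D {d} w).ncard - 1) * K := by
          have := le_trans hy'len hK'
          omega
        have h2 : K + ((fibRun 𝒜 D {d} w).ncard - 1) * K = (fibRun 𝒜 D {d} w).ncard * K := by
          have : (fibRun 𝒜 D {d} w).ncard - 1 + 1 = (fibRun 𝒜 D {d} w).ncard := by omega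
          calc K + ((fibRun 𝒜 D {d} w).ncard - 1) * K
              = (((fibRun 𝒜 D {d} w).ncard - 1) + 1) * K := by ring
            _ = (fibRun 𝒜 D {d} w).ncard * K := by rw [this]
        have h3 : (fibRun 𝒜 D {d} w).ncard ≤ (fibRun 𝒜 D {d} w₁).ncard - 1 := by omega
        calc y'.length + w.length ≤ (fibRun 𝒜 D {d} w).ncard * K := by rw [← h2]; exact h1
          _ ≤ ((fibRun 𝒜 D {d} w₁).ncard - 1) * K := Nat.mul_le_mul_right K h3
      have hroom₁ : Fintype.card Q ≤ (fibRun 𝒜 D {d} w₁).ncard + k := by omega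
      exact ih w₁ hen₁ hmem₁ hlen₁ hroom₁

end Greedy

end Stmt6
namespace Stmt6

variable {Q S : Type} [Fintype Q] [Fintype S]

lemma getLastD_concat (l : List S) (a t : S) : (l ++ [t]).getLastD a = t := by
  induction l generalizing a with
  | nil => rfl
  | cons u l ih => rw [List.cons_append, List.getLastD_cons, ih]

section Irred

variable (𝒜 : BA Q S) (M : Matrix S S ℝ) (D : Set (Q × S))

lemma rtg_restrict (v₀ : Q × S)
    (hDeq : D = {z | Relation.ReflTransGen (fun a b => 0 < Bmat 𝒜 M a b) v₀ z ∧
        Relation.ReflTransGen (fun a b => 0 < Bmat 𝒜 M a b) z v₀}) :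
    ∀ (a b : Q × S) (ha : a ∈ D) (hb : b ∈ D),
      Relation.ReflTransGen (fun x y => 0 < Bmat 𝒜 M x y) a b →
      Relation.ReflTransGen (fun x y : ↥D => 0 < subMat (Bmat 𝒜 M) D x y) ⟨a, ha⟩ ⟨b, hb⟩ := by
  intro a b ha hb hab
  induction hab with
  | refl => exact Relation.ReflTransGen.refl
  | @tail c b hac hcb ih =>
    -- c is in D
    have hcD : c ∈ D := by
      rw [hDeq]
      constructor
      · exact Relation.ReflTransGen.trans (hDeq ▸ ha).1 hac
      · exact Relation.ReflTransGen.trans (Relation.ReflTransGen.single hcb) (hDeq ▸ hb).2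
    exact Relation.ReflTransGen.tail (ih hcD) hcb

lemma exists_pow_pos (hM : IsMarkov M) (dd : ↥D) (p : ↥D)
    (hrtg : Relation.ReflTransGen (fun x y : ↥D => 0 < subMat (Bmat 𝒜 M) D x y) dd p) :
    ∃ k ≤ Fintype.card ↥D, 0 < (subMat (Bmat 𝒜 M) D ^ k) dd p := by
  have hmem := mem_RN_of_rtg _ _ hrtg
  refine RN_elim (fun x y : ↥D => 0 < subMat (Bmat 𝒜 M) D x y) dd
    (fun n b => ∃ k ≤ n, 0 < (subMat (Bmat 𝒜 M) D ^ k) dd b) ?_ ?_ ?_ _ p hmem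
  · refine ⟨0, le_rfl, ?_⟩
    rw [pow_zero, Matrix.one_apply_eq]
    norm_num
  · rintro n b ⟨k, hk, hpos⟩
    exact ⟨k, Nat.le_succ_of_le hk, hpos⟩
  · rintro n c b ⟨k, hk, hpos⟩ hcb
    refine ⟨k + 1, Nat.succ_le_succ hk, ?_⟩
    have h1 := subB_pow_add_ge 𝒜 M D hM k 1 dd c b
    rw [pow_one] at h1
    have h2 : 0 < (subMat (Bmat 𝒜 M) D ^ k) dd c * subMat (Bmat 𝒜 M) D c b :=
      mul_pos hpos hcb
    linarith

end Irred

end Stmt6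
/-- there is a word of length at most `|Q|²·|D|` such that
`d ∈ d⇒w` is a cut. -/
theorem stmt_6 {Q S : Type} [Fintype Q] [Fintype S]
    (𝒜 : BA Q S) (M : Matrix S S ℝ) (hM : IsMarkov M)
    (hU : 𝒜.Unambiguous) (hND : ¬ 𝒜.HasDiamond) (hAR : 𝒜.AllReachable)
    (D : Set (Q × S)) (hD : IsSCC (Bmat 𝒜 M) D) (hrec : RecurrentSCC 𝒜 M D)
    (d : Q × S) (hd : d ∈ D) :
    ∃ w : List S,
      w.length ≤ Fintype.card Q ^ 2 * D.ncard ∧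
      Enabled M (d.2 :: w) ∧
      d ∈ fibRun 𝒜 D {d} w ∧
      IsCut 𝒜 M D (fibRun 𝒜 D {d} w) := by
  classical
  obtain ⟨w, hen, hmem, hlen, hstab⟩ := Stmt6.exists_stable_word 𝒜 M D d hd
  -- length bound
  have hlen' : w.length ≤ Fintype.card Q ^ 2 * D.ncard := by
    have h1 := Stmt6.fib_ncard_le 𝒜 D d hd w hmem
    calc w.length ≤ ((fibRun 𝒜 D {d} w).ncard - 1) * (Fintype.card Q * D.ncard) := hlen
      _ ≤ Fintype.card Q * (Fintype.card Q * D.ncard) :=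
          Nat.mul_le_mul_right _ (by omega)
      _ = Fintype.card Q ^ 2 * D.ncard := by ring
  -- last letter of w
  have hlast : w.getLastD d.2 = d.2 := by
    cases hw : w with
    | nil => rfl
    | cons u y =>
      rw [← hw]
      exact (Stmt6.mem_fibRun_getLastD 𝒜 D _ (by rw [hw]; exact List.cons_ne_nil _ _) d.2
        hmem).symm
  refine ⟨w, hlen', hen, hmem, d, hd, w, hen, rfl, ?_⟩
  intro u hu hempty
  rw [hlast] at hu
  -- Setup
  set c := fibRun 𝒜 D {d} w with hc
  -- absorption of the co-reachability set
  have habs : ∀ e ∈ Co 𝒜 M D d, fibRun 𝒜 D {e} w ⊆ c := by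
    rintro e ⟨heD, we, hweEn, hweD, hweE⟩ z hz
    have h1 : fibRun 𝒜 D {e} w ⊆ fibRun 𝒜 D (fibRun 𝒜 D {d} we) w :=
      Stmt6.fibRun_mono 𝒜 D (fun z' hz' => by rcases hz' with rfl; exact hweE) w
    have h2 : fibRun 𝒜 D (fibRun 𝒜 D {d} we) w = c := by
      rw [← Stmt6.fibRun_append]
      exact hstab we hweEn hweD
    rw [← h2]
    exact h1 hz
  -- the killing word
  set κ : List S := w ++ u with hκ
  set L : ℕ := κ.length with hL
  set p : ℝ := Stmt6.Mw M d.2 κ with hp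
  have hppos : 0 < p := by
    rw [hp, hκ, Stmt6.Mw_append, hlast]
    exact mul_pos (Stmt6.Mw_pos_of_enabled M hen) (Stmt6.Mw_pos_of_enabled M hu)
  have hkillword : ∀ x : List S, Enabled M (d.2 :: x) → d ∈ fibRun 𝒜 D {d} x →
      fibRun 𝒜 D (fibRun 𝒜 D {d} x) κ = ∅ := by
    intro x hxen hxd
    have hxCo : ∀ e ∈ fibRun 𝒜 D {d} x, e ∈ Co 𝒜 M D d := by
      intro e he
      have heD : e ∈ D := by
        cases hx : x with
        | nil =>
          rw [hx] at he
          rcases he with rfl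
          exact hd
        | cons v y =>
          rw [hx] at he
          exact Stmt6.fibRun_subset_D 𝒜 D _ (List.cons_ne_nil _ _) he
      exact ⟨heD, x, hxen, hxd, he⟩
    have hsub : fibRun 𝒜 D (fibRun 𝒜 D {d} x) w ⊆ c := by
      intro z hz
      obtain ⟨e, he, hzrun⟩ := Stmt6.mem_fibRun_source 𝒜 D _ w hz
      exact habs e (hxCo e he) hzrun
    rw [hκ, Stmt6.fibRun_append]
    have : fibRun 𝒜 D (fibRun 𝒜 D (fibRun 𝒜 D {d} x) w) u ⊆ fibRun 𝒜 D c u :=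
      Stmt6.fibRun_mono 𝒜 D hsub u
    rw [hempty] at this
    exact Set.eq_empty_iff_forall_notMem.2 fun z hz => this hz
  -- the kill inequality
  have hkill : ∀ n (f : Set (Q × S)) (t : S),
      (∃ x, Enabled M (d.2 :: x) ∧ f = fibRun 𝒜 D {d} x ∧ t = x.getLastD d.2) →
      Stmt6.surv 𝒜 M D (n + L) f t ≤
        Stmt6.surv 𝒜 M D n f t - p * Stmt6.ret 𝒜 M D d n f t := by
    intro n
    induction n with
    | zero =>
      rintro f t ⟨x, hxen, rfl, rfl⟩
      by_cases hdf : d ∈ fibRun 𝒜 D {d} x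
      · have hts : x.getLastD d.2 = d.2 := by
          cases hx : x with
          | nil => rfl
          | cons v y =>
            rw [← hx]
            exact (Stmt6.mem_fibRun_getLastD 𝒜 D _ (by rw [hx]; exact List.cons_ne_nil _ _)
              d.2 hdf).symm
        have hkx : fibRun 𝒜 D (fibRun 𝒜 D {d} x) κ = ∅ := hkillword x hxen hdf
        have h1 : Stmt6.surv 𝒜 M D (0 + L) (fibRun 𝒜 D {d} x) (x.getLastD d.2)
            ≤ 1 - Stmt6.Mw M (x.getLastD d.2) κ := by
          rw [zero_add, hL]
          exact Stmt6.surv_kill 𝒜 M D hM κ _ _ hkx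
        have h2 : Stmt6.Mw M (x.getLastD d.2) κ = p := by rw [hts, hp]
        have h3 : Stmt6.surv 𝒜 M D 0 (fibRun 𝒜 D {d} x) (x.getLastD d.2) = 1 :=
          Stmt6.ind_of _ ⟨d, hdf⟩
        have h4 : Stmt6.ret 𝒜 M D d 0 (fibRun 𝒜 D {d} x) (x.getLastD d.2) = 1 :=
          Stmt6.ind_of _ hdf
        rw [h3, h4, mul_one]
        rw [h2] at h1
        exact h1
      · have h4 : Stmt6.ret 𝒜 M D d 0 (fibRun 𝒜 D {d} x) (x.getLastD d.2) = 0 :=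
          Stmt6.ind_of_not _ hdf
        rw [h4, mul_zero, sub_zero]
        exact Stmt6.surv_add_le 𝒜 M D hM 0 L _ _
    | succ n ih =>
      rintro f t ⟨x, hxen, rfl, rfl⟩
      have hshift : n + 1 + L = (n + L) + 1 := by omega
      have hLHS : Stmt6.surv 𝒜 M D (n + 1 + L) (fibRun 𝒜 D {d} x) (x.getLastD d.2)
          = ∑ t', M (x.getLastD d.2) t' *
              Stmt6.surv 𝒜 M D (n + L) (fibStep 𝒜 D (fibRun 𝒜 D {d} x) t') t' := by
        rw [hshift]
        rfl
      have hterm : ∀ t' ∈ Finset.univ,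
          M (x.getLastD d.2) t' *
              Stmt6.surv 𝒜 M D (n + L) (fibStep 𝒜 D (fibRun 𝒜 D {d} x) t') t'
            ≤ M (x.getLastD d.2) t' *
              (Stmt6.surv 𝒜 M D n (fibStep 𝒜 D (fibRun 𝒜 D {d} x) t') t' -
                p * Stmt6.ret 𝒜 M D d n (fibStep 𝒜 D (fibRun 𝒜 D {d} x) t') t') := by
        intro t' _
        rcases eq_or_lt_of_le (hM.1 (x.getLastD d.2) t') with h0 | hpos'
        · rw [← h0, zero_mul, zero_mul]
        · refine mul_le_mul_of_nonneg_left ?_ (le_of_lt hpos')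
          refine ih (fibStep 𝒜 D (fibRun 𝒜 D {d} x) t') t' ⟨x ++ [t'], ?_, ?_, ?_⟩
          · exact Stmt6.enabled_getLastD M hxen (List.isChain_pair.2 hpos')
          · rw [Stmt6.fibRun_append]
            rfl
          · rw [Stmt6.getLastD_concat]
      have hRHS : Stmt6.surv 𝒜 M D (n + 1) (fibRun 𝒜 D {d} x) (x.getLastD d.2) -
            p * Stmt6.ret 𝒜 M D d (n + 1) (fibRun 𝒜 D {d} x) (x.getLastD d.2)
          = ∑ t', M (x.getLastD d.2) t' *
              (Stmt6.surv 𝒜 M D n (fibStep 𝒜 D (fibRun 𝒜 D {d} x) t') t' -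
                p * Stmt6.ret 𝒜 M D d n (fibStep 𝒜 D (fibRun 𝒜 D {d} x) t') t') := by
        have e1 : Stmt6.surv 𝒜 M D (n + 1) (fibRun 𝒜 D {d} x) (x.getLastD d.2)
            = ∑ t', M (x.getLastD d.2) t' *
                Stmt6.surv 𝒜 M D n (fibStep 𝒜 D (fibRun 𝒜 D {d} x) t') t' := rfl
        have e2 : Stmt6.ret 𝒜 M D d (n + 1) (fibRun 𝒜 D {d} x) (x.getLastD d.2)
            = ∑ t', M (x.getLastD d.2) t' *
                Stmt6.ret 𝒜 M D d n (fibStep 𝒜 D (fibRun 𝒜 D {d} x) t') t' := rfl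
        rw [e1, e2, Finset.mul_sum, ← Finset.sum_sub_distrib]
        refine Finset.sum_congr rfl fun t' _ => ?_
        ring
      rw [hLHS, hRHS]
      exact Finset.sum_le_sum hterm
  -- matrix setup
  have hDne : Nonempty ↥D := ⟨⟨d, hd⟩⟩
  -- lower bound for `ret` in terms of matrix powers
  have hretLB : ∀ m : ℕ, (subMat (Bmat 𝒜 M) D ^ m) ⟨d, hd⟩ ⟨d, hd⟩ ≤
      Stmt6.ret 𝒜 M D d m {d} d.2 := by
    intro m
    rw [Stmt6.ret_eq_sum 𝒜 M D d hM, Stmt6.subB_pow_eq_Bfull_pow, Stmt6.Bfull_pow_word]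
    refine Finset.sum_le_sum fun x _ => ?_
    refine mul_le_mul_of_nonneg_left ?_ (Stmt6.Mw_nonneg M hM _ x)
    rcases eq_or_lt_of_le (Stmt6.PathM_nonneg 𝒜 D x d d) with h0 | hpos
    · rw [← h0]
      exact Stmt6.ind_nonneg _
    · rw [Stmt6.ind_of _ (Stmt6.PathM_pos_mem 𝒜 D hpos)]
      exact Stmt6.PathM_le_one 𝒜 D hND x d d
  -- irreducibility constants
  obtain ⟨v₀, hDeq⟩ := hD
  have hrtg : ∀ a b : ↥D, Relation.ReflTransGen
      (fun x y : ↥D => 0 < subMat (Bmat 𝒜 M) D x y) a b := by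
    intro a b
    have hiff := Set.ext_iff.1 hDeq
    have hpa := (hiff ↑a).1 a.prop
    have hpb := (hiff ↑b).1 b.prop
    have h1 : Relation.ReflTransGen (fun x y => 0 < Bmat 𝒜 M x y) ↑a ↑b :=
      Relation.ReflTransGen.trans hpa.2 hpb.1
    exact Stmt6.rtg_restrict 𝒜 M D v₀ hDeq ↑a ↑b a.prop b.prop h1
  have hfwd : ∀ q : ↥D, ∃ k ≤ Fintype.card ↥D,
      0 < (subMat (Bmat 𝒜 M) D ^ k) ⟨d, hd⟩ q :=
    fun q => Stmt6.exists_pow_pos 𝒜 M D hM ⟨d, hd⟩ q (hrtg ⟨d, hd⟩ q)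
  have hbwd : ∀ q : ↥D, ∃ k ≤ Fintype.card ↥D,
      0 < (subMat (Bmat 𝒜 M) D ^ k) q ⟨d, hd⟩ :=
    fun q => Stmt6.exists_pow_pos 𝒜 M D hM q ⟨d, hd⟩ (hrtg q ⟨d, hd⟩)
  choose α hα hαpos using hfwd
  choose β hβ hβpos using hbwd
  set κ₁ : ℝ := Finset.univ.inf' Finset.univ_nonempty
    (fun q : ↥D => (subMat (Bmat 𝒜 M) D ^ (α q)) ⟨d, hd⟩ q) with hκ₁
  set κ₂ : ℝ := Finset.univ.inf' Finset.univ_nonempty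
    (fun q : ↥D => (subMat (Bmat 𝒜 M) D ^ (β q)) q ⟨d, hd⟩) with hκ₂
  have hκ₁pos : 0 < κ₁ := (Finset.lt_inf'_iff _).2 fun q _ => hαpos q
  have hκ₂pos : 0 < κ₂ := (Finset.lt_inf'_iff _).2 fun q _ => hβpos q
  have hcDpos : 0 < (Fintype.card ↥D : ℝ) := by
    have : 0 < Fintype.card ↥D := Fintype.card_pos
    exact_mod_cast this
  set cDR : ℝ := (Fintype.card ↥D : ℝ) with hcDR
  set ε : ℝ := 1 / (2 * cDR^2) with hε
  have hεpos : 0 < ε := by rw [hε]; positivity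
  set c₀ : ℝ := κ₁ * ε * κ₂ with hc₀
  have hc₀pos : 0 < c₀ := mul_pos (mul_pos hκ₁pos hεpos) hκ₂pos
  have hgood : ∀ n : ℕ, ∃ m, n ≤ m ∧ c₀ ≤ Stmt6.ret 𝒜 M D d m {d} d.2 := by
    intro n
    have hspec := Stmt6.spectral_lower 𝒜 M D hM hDne hrec n
    have hex : ∃ q q' : ↥D, ε ≤ (subMat (Bmat 𝒜 M) D ^ n) q q' := by
      by_contra hno
      push_neg at hno
      have hlt : ∑ q : ↥D, ∑ q' : ↥D, (subMat (Bmat 𝒜 M) D ^ n) q q'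
          < ∑ _q : ↥D, ∑ _q' : ↥D, ε :=
        Finset.sum_lt_sum_of_nonempty Finset.univ_nonempty (fun q _ =>
          Finset.sum_lt_sum_of_nonempty Finset.univ_nonempty (fun q' _ => hno q q'))
      have hsum : ∑ _q : ↥D, ∑ _q' : ↥D, ε = cDR^2 * ε := by
        rw [Finset.sum_const, Finset.sum_const, Finset.card_univ, nsmul_eq_mul, nsmul_eq_mul,
          ← hcDR]
        ring
      have hcDne : cDR ≠ 0 := ne_of_gt hcDpos
      have hval : cDR^2 * ε = 1/2 := by
        rw [hε]
        field_simp
      rw [hsum, hval] at hlt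
      linarith
    obtain ⟨q, q', hqq'⟩ := hex
    refine ⟨α q + n + β q', by omega, ?_⟩
    have hstep1 := Stmt6.subB_pow_add_ge 𝒜 M D hM (α q) n ⟨d, hd⟩ q q'
    have hstep2 := Stmt6.subB_pow_add_ge 𝒜 M D hM (α q + n) (β q') ⟨d, hd⟩ q' ⟨d, hd⟩
    have hκ₁le : κ₁ ≤ (subMat (Bmat 𝒜 M) D ^ (α q)) ⟨d, hd⟩ q :=
      Finset.inf'_le _ (Finset.mem_univ q)
    have hκ₂le : κ₂ ≤ (subMat (Bmat 𝒜 M) D ^ (β q')) q' ⟨d, hd⟩ :=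
      Finset.inf'_le _ (Finset.mem_univ q')
    have hm1 : κ₁ * ε ≤ (subMat (Bmat 𝒜 M) D ^ (α q)) ⟨d, hd⟩ q *
        (subMat (Bmat 𝒜 M) D ^ n) q q' :=
      mul_le_mul hκ₁le hqq' (le_of_lt hεpos) (le_of_lt (lt_of_lt_of_le hκ₁pos hκ₁le))
    have hm2 : (κ₁ * ε) * κ₂ ≤ ((subMat (Bmat 𝒜 M) D ^ (α q)) ⟨d, hd⟩ q *
        (subMat (Bmat 𝒜 M) D ^ n) q q') * (subMat (Bmat 𝒜 M) D ^ (β q')) q' ⟨d, hd⟩ :=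
      mul_le_mul hm1 hκ₂le (le_of_lt hκ₂pos)
        (le_trans (le_of_lt (mul_pos hκ₁pos hεpos)) hm1)
    have hm3 : ((subMat (Bmat 𝒜 M) D ^ (α q)) ⟨d, hd⟩ q *
        (subMat (Bmat 𝒜 M) D ^ n) q q') * (subMat (Bmat 𝒜 M) D ^ (β q')) q' ⟨d, hd⟩
          ≤ (subMat (Bmat 𝒜 M) D ^ (α q + n)) ⟨d, hd⟩ q' *
            (subMat (Bmat 𝒜 M) D ^ (β q')) q' ⟨d, hd⟩ :=
      mul_le_mul_of_nonneg_right hstep1 (Stmt6.subB_pow_nonneg 𝒜 M D hM _ _ _)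
    have := hretLB (α q + n + β q')
    have hchain : c₀ ≤ (subMat (Bmat 𝒜 M) D ^ (α q + n + β q')) ⟨d, hd⟩ ⟨d, hd⟩ := by
      rw [hc₀]
      linarith
    linarith
  -- descent to a contradiction
  have hdesc : ∀ i : ℕ, ∃ n, Stmt6.surv 𝒜 M D n {d} d.2 ≤ 1 - i * (p * c₀) := by
    intro i
    induction i with
    | zero =>
      refine ⟨0, ?_⟩
      have h1 : Stmt6.surv 𝒜 M D 0 {d} d.2 = Stmt6.ind (({d} : Set (Q × S)).Nonempty) := rfl
      rw [h1, Stmt6.ind_of _ ⟨d, rfl⟩]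
      push_cast
      linarith
    | succ i ihh =>
      obtain ⟨n, hn⟩ := ihh
      obtain ⟨m, hnm, hc₀m⟩ := hgood n
      have h1 : Stmt6.surv 𝒜 M D (m + L) {d} d.2 ≤
          Stmt6.surv 𝒜 M D m {d} d.2 - p * Stmt6.ret 𝒜 M D d m {d} d.2 :=
        hkill m {d} d.2 ⟨[], List.isChain_singleton _, rfl, rfl⟩
      have h2 : Stmt6.surv 𝒜 M D m {d} d.2 ≤ Stmt6.surv 𝒜 M D n {d} d.2 := by
        obtain ⟨k, rfl⟩ := Nat.exists_eq_add_of_le hnm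
        exact Stmt6.surv_add_le 𝒜 M D hM n k {d} d.2
      have h3 : p * c₀ ≤ p * Stmt6.ret 𝒜 M D d m {d} d.2 :=
        mul_le_mul_of_nonneg_left hc₀m (le_of_lt hppos)
      refine ⟨m + L, ?_⟩
      push_cast
      linarith
  obtain ⟨i, hi⟩ := exists_nat_gt (1 / (p * c₀))
  obtain ⟨n, hn⟩ := hdesc i
  have hpc : 0 < p * c₀ := mul_pos hppos hc₀pos
  have hgt : 1 < i * (p * c₀) := by
    rw [div_lt_iff₀ hpc] at hi
    linarith
  have hnn := Stmt6.surv_nonneg 𝒜 M D hM n {d} d.2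
  linarith
end
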